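/- arXiv:2301.13534 — 5 statements merged into one kernel-verified Lean document; each statement's English description precedes it below -/
import Mathlib

section
/- For every Pandora's Box instance with a finite scenario set and every run of Weitzman's rule with partial updates (Algorithm 2, with any choice of minimizers at each step), the algorithm's total cost satisfies ALG ≤ (3 + 2√2) · OPT, where OPT is the minimum total cost over all partially-adaptive solutions. -/
/-- Opening cost paid on scenario `s` by the partially-adaptive solution that opens the
boxes in the order `π` and stops on scenario `s` after opening box `π (t s)`. -/
noncomputable def optOpenCost {B S : Type*} [Fintype B] (c : B → ℝ)
    (π : Fin (Fintype.card B) ≃ B) (t : S → Fin (Fintype.card B)) (s : S) : ℝ :=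
  ∑ i ∈ Finset.Iic (t s), c (π i)

/-- Value selected on scenario `s` by the partially-adaptive solution `(π, t)`:
the minimum value among the opened boxes `π 0, …, π (t s)`. -/
noncomputable def optValue {B S : Type*} [Fintype B] (v : B → S → ℝ)
    (π : Fin (Fintype.card B) ≃ B) (t : S → Fin (Fintype.card B)) (s : S) : ℝ :=
  (Finset.Iic (t s)).inf' Finset.nonempty_Iic (fun i => v (π i) s)

section helpers

/-- Abel-type bound: if prefix sums of `m` are bounded by `C·k` and `w` is a
nonnegative nonincreasing sequence, then `∑ m j * w j ≤ C * ∑ w j`. -/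
lemma pandora_abel_aux (C : ℝ) (m w : ℕ → ℝ)
    (hw0 : ∀ j, 0 ≤ w j) (hwa : ∀ i j, i ≤ j → w j ≤ w i)
    (hM : ∀ k : ℕ, ∑ j ∈ Finset.range k, m j ≤ C * k) :
    ∀ n : ℕ, ∑ j ∈ Finset.range n, m j * w j
      ≤ C * ∑ j ∈ Finset.range n, w j - (C * n - ∑ j ∈ Finset.range n, m j) * w n := by
  intro n
  induction n with
  | zero => simp
  | succ n ih =>
      rw [Finset.sum_range_succ, Finset.sum_range_succ, Finset.sum_range_succ]
      have h1 : (C * (n+1) - (∑ j ∈ Finset.range n, m j + m n)) * w (n+1)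
          ≤ (C * (n+1) - (∑ j ∈ Finset.range n, m j + m n)) * w n := by
        apply mul_le_mul_of_nonneg_left (hwa n (n+1) (Nat.le_succ n))
        have := hM (n+1)
        rw [Finset.sum_range_succ] at this
        push_cast at this ⊢
        linarith
      push_cast
      push_cast at h1
      nlinarith [ih]

lemma pandora_abel (C : ℝ) (m w : ℕ → ℝ) (hm : ∀ j, 0 ≤ m j)
    (hw0 : ∀ j, 0 ≤ w j) (hwa : ∀ i j, i ≤ j → w j ≤ w i)
    (hM : ∀ k : ℕ, ∑ j ∈ Finset.range k, m j ≤ C * k) (n : ℕ) :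
    ∑ j ∈ Finset.range n, m j * w j ≤ C * ∑ j ∈ Finset.range n, w j := by
  have h := pandora_abel_aux C m w hw0 hwa hM n
  have h2 : 0 ≤ (C * n - ∑ j ∈ Finset.range n, m j) * w n := by
    apply mul_nonneg _ (hw0 n)
    have := hM n; linarith
  linarith

/-- Mediant inequality: some index achieves ratio at most the aggregate ratio. -/
lemma pandora_mediant {ι : Type*} (F : Finset ι) (num den : ι → ℝ)
    (hnum : ∀ i ∈ F, 0 ≤ num i) (hden : ∀ i ∈ F, 0 ≤ den i)
    (hpos : 0 < ∑ i ∈ F, den i) :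
    ∃ i ∈ F, 0 < den i ∧
      num i * (∑ i ∈ F, den i) ≤ (∑ i ∈ F, num i) * den i := by
  by_contra hcon
  push_neg at hcon
  have hne : ∃ i ∈ F, 0 < den i := by
    by_contra h
    push_neg at h
    have : ∑ i ∈ F, den i ≤ 0 := Finset.sum_nonpos (fun i hi => h i hi)
    linarith
  obtain ⟨i0, hi0F, hi0⟩ := hne
  have hlt : ∑ i ∈ F, (∑ j ∈ F, num j) * den i < ∑ i ∈ F, num i * (∑ j ∈ F, den j) := by
    apply Finset.sum_lt_sum
    · intro i hi
      rcases lt_or_ge 0 (den i) with h | h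
      · exact le_of_lt (hcon i hi h)
      · have hdi : den i = 0 := le_antisymm h (hden i hi)
        rw [hdi, mul_zero]
        exact mul_nonneg (hnum i hi) (le_of_lt hpos)
    · exact ⟨i0, hi0F, hcon i0 hi0F hi0⟩
  rw [← Finset.mul_sum, ← Finset.sum_mul] at hlt
  exact lt_irrefl _ hlt

/-- There is a set of the `k` smallest elements. -/
lemma pandora_bottom {S : Type*} [DecidableEq S] (o : S → ℝ) :
    ∀ (k : ℕ) (F : Finset S), k ≤ F.card →
      ∃ W ⊆ F, W.card = k ∧ ∀ s ∈ W, ∀ s' ∈ F \ W, o s ≤ o s' := by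
  intro k
  induction k with
  | zero => intro F _; exact ⟨∅, Finset.empty_subset F, rfl, by simp⟩
  | succ k ih =>
      intro F hk
      obtain ⟨W, hWF, hWcard, hWmin⟩ := ih F (Nat.le_of_succ_le hk)
      have hne : (F \ W).Nonempty := by
        rw [← Finset.card_pos, Finset.card_sdiff_of_subset hWF, hWcard]
        omega
      obtain ⟨s0, hs0, hs0min⟩ := Finset.exists_min_image (F \ W) o hne
      refine ⟨insert s0 W, ?_, ?_, ?_⟩
      · exact Finset.insert_subset ((Finset.mem_sdiff.1 hs0).1) hWF
      · rw [Finset.card_insert_of_notMem ((Finset.mem_sdiff.1 hs0).2), hWcard]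
      · intro s hs s' hs'
        have hs'W : s' ∈ F \ W := by
          rw [Finset.mem_sdiff] at hs' ⊢
          exact ⟨hs'.1, fun h => hs'.2 (Finset.mem_insert_of_mem h)⟩
        rcases Finset.mem_insert.1 hs with rfl | hsW
        · exact hs0min s' hs'W
        · exact hWmin s hsW s' hs'W

/-- In a list sorted in decreasing order, if more than `j` entries are `≥ θ`,
then the entry at index `j` is `≥ θ`. -/
lemma pandora_sorted_rank : ∀ (l : List ℝ), l.Pairwise (· ≥ ·) →
    ∀ (j : ℕ) (h : j < l.length) (θ : ℝ),
      j < l.countP (fun x => decide (θ ≤ x)) → θ ≤ l.get ⟨j, h⟩ := by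
  intro l
  induction l with
  | nil => intro _ j h; simp at h
  | cons a tl ih =>
      intro hsort j h θ hcount
      rcases j with _ | j
      · have hpos : 0 < (a :: tl).countP (fun x => decide (θ ≤ x)) := Nat.lt_of_le_of_lt (Nat.zero_le _) hcount
        rw [List.countP_pos_iff] at hpos
        obtain ⟨x, hx, hθx⟩ := hpos
        simp only [decide_eq_true_eq] at hθx
        rcases List.mem_cons.1 hx with rfl | hxtl
        · exact hθx
        · exact le_trans hθx ((List.pairwise_cons.1 hsort).1 x hxtl)
      · have htl : j < tl.countP (fun x => decide (θ ≤ x)) := by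
          rw [List.countP_cons] at hcount
          have hite : (if (decide (θ ≤ a)) = true then 1 else 0) ≤ 1 := by split <;> omega
          omega
        exact ih (List.pairwise_cons.1 hsort).2 j (by simpa using h) θ htl

lemma pandora_sum_getD : ∀ (l : List ℝ),
    ∑ j ∈ Finset.range l.length, l.getD j 0 = l.sum := by
  intro l
  induction l with
  | nil => simp
  | cons a tl ih =>
      rw [List.length_cons, Finset.sum_range_succ']
      simp only [List.getD_cons_succ, List.getD_cons_zero, List.sum_cons, ih]
      ring

end helpers

set_option maxHeartbeats 2000000 in
/-- Weitzman's rule with partial updates (Algorithm 2) is a `(3 + 2√2)`-approximation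
against the partially-adaptive optimal: for every run of the algorithm (any choice of
minimizing box `bx t` and scenario set `A t` at each step `t`) and every
partially-adaptive solution `(π, τ)`, the total cost of the algorithm is at most
`(3 + 2√2)` times the total cost of `(π, τ)`. -/
theorem weitzman_partial_updates_approx
    {B S : Type*} [Fintype B] [Fintype S] [Nonempty B] [Nonempty S]
    [DecidableEq B] [DecidableEq S]
    (c : B → ℝ) (hc : ∀ b, 0 ≤ c b)
    (v : B → S → ℝ) (hv : ∀ b s, 0 ≤ v b s)
    -- a run of Algorithm 2 with `T` steps:
    (T : ℕ) (R : ℕ → Finset S) (cst : ℕ → B → ℝ) (bx : ℕ → B) (A : ℕ → Finset S)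
    (hR0 : R 0 = Finset.univ)
    (hcst0 : cst 0 = c)
    (hAsub : ∀ t < T, A t ⊆ R t)
    (hAne : ∀ t < T, (A t).Nonempty)
    -- `(bx t, A t)` minimizes the ratio over all boxes and nonempty subsets of `R t`:
    (hmin : ∀ t < T, ∀ b' : B, ∀ A' : Finset S, A' ⊆ R t → A'.Nonempty →
      (cst t (bx t) * (R t).card + ∑ s ∈ A t, v (bx t) s) / (A t).card ≤
        (cst t b' * (R t).card + ∑ s ∈ A', v b' s) / A'.card)
    (hRsucc : ∀ t < T, R (t + 1) = R t \ A t)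
    (hcstsucc : ∀ t < T, cst (t + 1) = Function.update (cst t) (bx t) 0)
    (hRT : R T = ∅)
    -- any partially-adaptive solution:
    (π : Fin (Fintype.card B) ≃ B) (τ : S → Fin (Fintype.card B)) :
    ∑ t ∈ Finset.range T, (cst t (bx t) * (R t).card + ∑ s ∈ A t, v (bx t) s) ≤
      (3 + 2 * Real.sqrt 2) * ∑ s, (optOpenCost c π τ s + optValue v π τ s) := by
  classical
  -- basic constants
  set sq2 : ℝ := Real.sqrt 2 with hsq2
  have hsq2sq : sq2 ^ 2 = 2 := Real.sq_sqrt (by norm_num)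
  have hsq2pos : 0 < sq2 := Real.sqrt_pos.2 (by norm_num)
  have hsq2lt : sq2 < 2 := by nlinarith
  have hsq2gt : 1 < sq2 := by nlinarith
  set β : ℝ := 1 + sq2 with hβ
  set α : ℝ := 2 - sq2 with hα
  have hα0 : 0 < α := by simp only [hα]; linarith
  have hα1 : α ≤ 1 := by simp only [hα]; linarith
  have hβ0 : 0 < β := by simp only [hβ]; linarith
  -- scenario cost of OPT
  set o : S → ℝ := fun s => optOpenCost c π τ s + optValue v π τ s with ho
  have hval0 : ∀ s, 0 ≤ optValue v π τ s := by
    intro s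
    apply Finset.le_inf'
    intro i _
    exact hv _ _
  have hopen0 : ∀ s, 0 ≤ optOpenCost c π τ s :=
    fun s => Finset.sum_nonneg (fun i _ => hc _)
  have ho0 : ∀ s, 0 ≤ o s := fun s => add_nonneg (hopen0 s) (hval0 s)
  set N : ℕ := Fintype.card S with hN
  -- sorted (descending) list of OPT costs
  set L : List ℝ := Multiset.sort (Finset.univ.val.map o) (· ≥ ·) with hL
  have hLsorted : L.Pairwise (· ≥ ·) := Multiset.pairwise_sort _ _
  have hLperm : (L : Multiset ℝ) = Finset.univ.val.map o := Multiset.sort_eq _ _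
  have hLlen : L.length = N := by
    have := congrArg Multiset.card hLperm
    simpa using this
  set w : ℕ → ℝ := fun j => L.getD j 0 with hw
  have hmemL : ∀ x ∈ L, 0 ≤ x := by
    intro x hx
    have : x ∈ (L : Multiset ℝ) := by exact_mod_cast hx
    rw [hLperm] at this
    obtain ⟨s, _, rfl⟩ := Multiset.mem_map.1 this
    exact ho0 s
  have hw0 : ∀ j, 0 ≤ w j := by
    intro j
    rcases lt_or_ge j L.length with h | h
    · rw [hw]
      simp only [List.getD_eq_getElem?_getD]
      rw [List.getElem?_eq_getElem h]
      exact hmemL _ (List.getElem_mem h)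
    · rw [hw]
      simp [List.getD_eq_getElem?_getD, List.getElem?_eq_none h]
  have hwa : ∀ i j, i ≤ j → w j ≤ w i := by
    intro i j hij
    rcases lt_or_ge j L.length with h | h
    · have hi : i < L.length := lt_of_le_of_lt hij h
      have := List.Pairwise.rel_get_of_le hLsorted
        (a := ⟨i, hi⟩) (b := ⟨j, h⟩) (by exact_mod_cast hij)
      simp only [hw, List.getD_eq_getElem?_getD, List.getElem?_eq_getElem h,
        List.getElem?_eq_getElem hi]
      exact this
    · have : w j = 0 := by
        simp [hw, List.getD_eq_getElem?_getD, List.getElem?_eq_none h]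
      rw [this]
      exact hw0 i
  have hwsum : ∑ j ∈ Finset.range N, w j = ∑ s, o s := by
    rw [← hLlen]
    rw [show ∑ j ∈ Finset.range L.length, w j = ∑ j ∈ Finset.range L.length, L.getD j 0 from rfl]
    rw [pandora_sum_getD]
    have : L.sum = ((L : Multiset ℝ)).sum := rfl
    rw [this, hLperm]
    rfl
  have hrank : ∀ (θ : ℝ) (j : ℕ) (Q : Finset S), (∀ s ∈ Q, θ ≤ o s) → j < Q.card → θ ≤ w j := by
    intro θ j Q hQ hjQ
    have hQsub : Q ⊆ Finset.univ.filter (fun s => θ ≤ o s) := by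
      intro s hs
      exact Finset.mem_filter.2 ⟨Finset.mem_univ s, hQ s hs⟩
    have hcount : Q.card ≤ L.countP (fun x => decide (θ ≤ x)) := by
      have h1 : L.countP (fun x => decide (θ ≤ x))
          = Multiset.countP (fun x => θ ≤ x) (L : Multiset ℝ) := rfl
      rw [h1, hLperm, Multiset.countP_map]
      calc Q.card ≤ (Finset.univ.filter (fun s => θ ≤ o s)).card :=
            Finset.card_le_card hQsub
        _ = Multiset.card (Multiset.filter (fun s => θ ≤ o s) Finset.univ.val) := rfl
    have hjL : j < L.length := by
      have := List.countP_le_length (l := L) (p := fun x => decide (θ ≤ x))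
      omega
    have := pandora_sorted_rank L hLsorted j hjL θ (by omega)
    rw [hw]
    simp only [List.getD_eq_getElem?_getD, List.getElem?_eq_getElem hjL]
    exact this
  -- cost bounds along the run
  have hcstb : ∀ t, t ≤ T → ∀ b, 0 ≤ cst t b ∧ cst t b ≤ c b := by
    intro t
    induction t with
    | zero => intro _ b; rw [hcst0]; exact ⟨hc b, le_refl _⟩
    | succ t ih =>
        intro ht b
        have ht' : t < T := Nat.lt_of_succ_le ht
        rw [hcstsucc t ht']
        by_cases hb : b = bx t
        · subst hb
          rw [Function.update_self]
          exact ⟨le_refl 0, hc _⟩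
        · rw [Function.update_of_ne hb]
          exact ih (Nat.le_of_lt ht') b
  have hrpos : ∀ t, t < T → 0 < (R t).card := by
    intro t ht
    exact Finset.card_pos.2 ((hAne t ht).mono (hAsub t ht))
  have hrcard : ∀ t, t < T → (R (t+1)).card = (R t).card - (A t).card := by
    intro t ht
    rw [hRsucc t ht, Finset.card_sdiff_of_subset (hAsub t ht)]
  -- the per-step bound
  have key : ∀ t, t < T →
      cst t (bx t) * ((R t).card : ℝ) + ∑ s ∈ A t, v (bx t) s ≤
      (2 + sq2) * ((A t).card : ℝ) * w (⌈α * ((R t).card : ℝ)⌉₊ - 1) := by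
    intro t ht
    set r : ℕ := (R t).card with hr
    have hr1 : 1 ≤ r := hrpos t ht
    have hr0 : (0:ℝ) < r := by exact_mod_cast hr1
    set k : ℕ := ⌈(r : ℝ)/β⌉₊ with hk
    have hk1 : 1 ≤ k := by
      rw [hk, Nat.one_le_ceil_iff]
      positivity
    have hkr : k ≤ r := by
      rw [hk, Nat.ceil_le]
      exact div_le_self (le_of_lt hr0) (by linarith)
    have hk0 : (0:ℝ) < k := by exact_mod_cast hk1
    have hrβk : (r : ℝ) ≤ β * k := by
      have h5 := Nat.le_ceil ((r:ℝ)/β)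
      rw [← hk, div_le_iff₀ hβ0] at h5
      linarith
    obtain ⟨W, hWR, hWcard, hWmin⟩ := pandora_bottom o k (R t) hkr
    have hWne : W.Nonempty := Finset.card_pos.1 (by omega)
    set θ : ℝ := W.sup' hWne o with hθ
    have hθW : ∀ s ∈ W, o s ≤ θ := fun s hs => Finset.le_sup' o hs
    obtain ⟨s0, hs0W, hs0⟩ := Finset.exists_mem_eq_sup' hWne o
    have hs0' : θ = o s0 := by rw [hθ]; exact hs0
    have hθ0 : 0 ≤ θ := by rw [hs0']; exact ho0 s0
    set q : ℕ := ⌈α * (r : ℝ)⌉₊ with hq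
    have hq1 : 1 ≤ q := by
      rw [hq, Nat.one_le_ceil_iff]
      positivity
    -- rank bound
    have hwq : θ ≤ w (q - 1) := by
      apply hrank θ (q-1) (insert s0 ((R t) \ W))
      · intro s hs
        rcases Finset.mem_insert.1 hs with rfl | hs'
        · exact le_of_eq hs0'
        · rw [hs0']
          exact hWmin s0 hs0W s hs'
      · have hcardQ : (insert s0 ((R t) \ W)).card = r - k + 1 := by
          rw [Finset.card_insert_of_notMem (fun hmem => (Finset.mem_sdiff.1 hmem).2 hs0W),
            Finset.card_sdiff_of_subset hWR, hWcard]
        rw [hcardQ]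
        have hkub : ((k:ℝ) - 1) * β < r := by
          have h5 : (k:ℝ) < (r:ℝ)/β + 1 := by
            rw [hk]
            exact Nat.ceil_lt_add_one (by positivity)
          have h6 : (k:ℝ) - 1 < (r:ℝ)/β := by linarith
          rwa [lt_div_iff₀ hβ0] at h6
        have hβprod : β * (sq2 - 1) = 1 := by
          rw [hβ]
          linear_combination hsq2sq
        have hqle : q ≤ r - k + 1 := by
          rw [hq, Nat.ceil_le]
          have hcast : ((r - k + 1 : ℕ) : ℝ) = (r:ℝ) - k + 1 := by
            push_cast [hkr]
            ring
          rw [hcast]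
          have h9 := mul_lt_mul_of_pos_right hkub (show (0:ℝ) < sq2 - 1 by linarith)
          rw [mul_assoc, hβprod, mul_one] at h9
          rw [hα]
          nlinarith [h9]
        omega
    -- min-ratio bound via the OPT prefix
    obtain ⟨sm, hsmW, hsmmax⟩ := Finset.exists_max_image W τ hWne
    have hprefix : ∑ i ∈ Finset.Iic (τ sm), c (π i) ≤ θ := by
      have h1 : optOpenCost c π τ sm ≤ o sm := by
        have := hval0 sm
        simp only [ho]
        linarith
      exact le_trans h1 (hθW sm hsmW)
    have hex : ∀ s : S, ∃ i ∈ Finset.Iic (τ s), optValue v π τ s = v (π i) s :=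
      fun s => Finset.exists_mem_eq_inf' Finset.nonempty_Iic _
    choose js hjs1 hjs2 using hex
    set F : Finset (Fin (Fintype.card B)) := Finset.Iic (τ sm) with hF
    have hmapsW : ∀ s ∈ W, js s ∈ F := by
      intro s hs
      rw [hF, Finset.mem_Iic]
      exact le_trans (Finset.mem_Iic.1 (hjs1 s)) (hsmmax s hs)
    set den : Fin (Fintype.card B) → ℝ := fun i => ((W.filter (fun s => js s = i)).card : ℝ) with hden
    set num : Fin (Fintype.card B) → ℝ :=
      fun i => cst t (π i) * r + ∑ s ∈ W.filter (fun s => js s = i), v (π i) s with hnum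
    have hdsum : ∑ i ∈ F, den i = (k : ℝ) := by
      have h10 : W.card = ∑ i ∈ F, (W.filter (fun s => js s = i)).card :=
        Finset.card_eq_sum_card_fiberwise hmapsW
      rw [hden, ← Nat.cast_sum, ← h10, hWcard]
    have hnsum : ∑ i ∈ F, num i ≤ (r : ℝ) * θ + k * θ := by
      rw [hnum, Finset.sum_add_distrib]
      apply add_le_add
      · calc ∑ i ∈ F, cst t (π i) * r ≤ ∑ i ∈ F, c (π i) * r := by
              apply Finset.sum_le_sum
              intro i _
              exact mul_le_mul_of_nonneg_right ((hcstb t (le_of_lt ht) (π i)).2) (le_of_lt hr0)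
          _ = (∑ i ∈ F, c (π i)) * r := by rw [Finset.sum_mul]
          _ ≤ θ * r := mul_le_mul_of_nonneg_right hprefix (le_of_lt hr0)
          _ = (r:ℝ) * θ := by ring
      · have hinner : ∀ i ∈ F, ∑ s ∈ W.filter (fun s => js s = i), v (π i) s
            = ∑ s ∈ W.filter (fun s => js s = i), v (π (js s)) s := by
          intro i _
          apply Finset.sum_congr rfl
          intro s hs
          rw [(Finset.mem_filter.1 hs).2]
        rw [Finset.sum_congr rfl hinner, Finset.sum_fiberwise_of_maps_to hmapsW]
        calc ∑ s ∈ W, v (π (js s)) s = ∑ s ∈ W, optValue v π τ s := by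
              apply Finset.sum_congr rfl
              intro s _
              rw [← hjs2 s]
          _ ≤ ∑ s ∈ W, θ := by
              apply Finset.sum_le_sum
              intro s hs
              have h7 : optValue v π τ s ≤ o s := by
                have := hopen0 s
                simp only [ho]
                linarith
              exact le_trans h7 (hθW s hs)
          _ = (k:ℝ) * θ := by rw [Finset.sum_const, hWcard, nsmul_eq_mul]
    have hdpos : 0 < ∑ i ∈ F, den i := by rw [hdsum]; exact hk0
    have hdnn : ∀ i ∈ F, 0 ≤ den i := fun i _ => Nat.cast_nonneg _
    have hnnn : ∀ i ∈ F, 0 ≤ num i := by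
      intro i _
      rw [hnum]
      apply add_nonneg
      · exact mul_nonneg (hcstb t (le_of_lt ht) (π i)).1 (le_of_lt (by exact_mod_cast hr0))
      · exact Finset.sum_nonneg (fun s _ => hv _ _)
    obtain ⟨i0, hi0F, hi0pos, hi0⟩ := pandora_mediant F num den hnnn hdnn hdpos
    have hA'sub : W.filter (fun s => js s = i0) ⊆ R t :=
      subset_trans (Finset.filter_subset _ _) hWR
    have hA'ne : (W.filter (fun s => js s = i0)).Nonempty := by
      rw [← Finset.card_pos]
      have h11 := hi0pos
      rw [hden] at h11
      simp only [Nat.cast_pos] at h11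
      exact h11
    have hm := hmin t ht (π i0) (W.filter (fun s => js s = i0)) hA'sub hA'ne
    have hApos : 0 < ((A t).card : ℝ) := by
      exact_mod_cast Finset.card_pos.2 (hAne t ht)
    have hr1' : num i0 / den i0 ≤ (∑ i ∈ F, num i) / (∑ i ∈ F, den i) := by
      rw [div_le_div_iff₀ hi0pos hdpos]
      linarith [hi0]
    have hr2 : (∑ i ∈ F, num i) / (∑ i ∈ F, den i) ≤ (1 + β) * θ := by
      rw [hdsum, div_le_iff₀ hk0]
      have h12 : (r:ℝ) * θ ≤ β * (k:ℝ) * θ := by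
        have := mul_le_mul_of_nonneg_right hrβk hθ0
        linarith
      calc (∑ i ∈ F, num i) ≤ β * (k:ℝ) * θ + (k:ℝ) * θ := by linarith [hnsum]
        _ = (1+β) * θ * (k:ℝ) := by ring
    have hLHS : (cst t (bx t) * (r:ℝ) + ∑ s ∈ A t, v (bx t) s) ≤ (1+β) * θ * (A t).card := by
      have hm' : (cst t (bx t) * (r:ℝ) + ∑ s ∈ A t, v (bx t) s) / (A t).card
          ≤ num i0 / den i0 := hm
      have hcomb := le_trans hm' (le_trans hr1' hr2)
      rw [div_le_iff₀ hApos] at hcomb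
      linarith
    have h1β : (1:ℝ) + β = 2 + sq2 := by rw [hβ]; ring
    calc cst t (bx t) * (r:ℝ) + ∑ s ∈ A t, v (bx t) s
        ≤ (1+β) * θ * (A t).card := hLHS
      _ ≤ (1+β) * w (q - 1) * (A t).card := by
          apply mul_le_mul_of_nonneg_right _ (le_of_lt hApos)
          apply mul_le_mul_of_nonneg_left hwq (by rw [h1β]; linarith)
      _ = (2 + sq2) * ((A t).card : ℝ) * w (q - 1) := by rw [h1β]; ring
  -- per-step coverage by interval sums
  have step2 : ∀ t, t < T →
      ((A t).card : ℝ) * w (⌈α * ((R t).card : ℝ)⌉₊ - 1) ≤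
      ∑ x ∈ Finset.Ioc ((R (t+1)).card) ((R t).card), w (⌈α * (x : ℝ)⌉₊ - 1) := by
    intro t ht
    have hAle : (A t).card ≤ (R t).card := Finset.card_le_card (hAsub t ht)
    have hcardIoc : (Finset.Ioc ((R (t+1)).card) ((R t).card)).card = (A t).card := by
      rw [Nat.card_Ioc, hrcard t ht]
      omega
    have : ((A t).card : ℝ) * w (⌈α * ((R t).card : ℝ)⌉₊ - 1)
        = ∑ _x ∈ Finset.Ioc ((R (t+1)).card) ((R t).card), w (⌈α * ((R t).card : ℝ)⌉₊ - 1) := by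
      rw [Finset.sum_const, hcardIoc, nsmul_eq_mul]
    rw [this]
    apply Finset.sum_le_sum
    intro x hx
    apply hwa
    have hxle : x ≤ (R t).card := (Finset.mem_Ioc.1 hx).2
    have : ⌈α * (x : ℝ)⌉₊ ≤ ⌈α * ((R t).card : ℝ)⌉₊ := by
      apply Nat.ceil_le_ceil
      have : (x : ℝ) ≤ ((R t).card : ℝ) := by exact_mod_cast hxle
      nlinarith [hα0]
    omega
  -- telescoping
  have hrmono : ∀ t, t < T → (R (t+1)).card ≤ (R t).card := by
    intro t ht
    rw [hRsucc t ht]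
    exact Finset.card_le_card (Finset.sdiff_subset)
  have hrtop : ∀ t, t ≤ T → (R t).card ≤ (R 0).card := by
    intro t
    induction t with
    | zero => intro _; exact le_refl _
    | succ t ih =>
        intro ht
        exact le_trans (hrmono t (Nat.lt_of_succ_le ht)) (ih (Nat.le_of_succ_le ht))
  have tele : ∑ t ∈ Finset.range T, ∑ x ∈ Finset.Ioc ((R (t+1)).card) ((R t).card),
      w (⌈α * (x : ℝ)⌉₊ - 1) = ∑ x ∈ Finset.Ioc 0 N, w (⌈α * (x : ℝ)⌉₊ - 1) := by
    have haux : ∀ u, u ≤ T → ∑ t ∈ Finset.range u, ∑ x ∈ Finset.Ioc ((R (t+1)).card) ((R t).card),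
        w (⌈α * (x : ℝ)⌉₊ - 1) = ∑ x ∈ Finset.Ioc ((R u).card) ((R 0).card), w (⌈α * (x : ℝ)⌉₊ - 1) := by
      intro u
      induction u with
      | zero => intro _; simp
      | succ u ih =>
          intro hu
          have hu' : u < T := Nat.lt_of_succ_le hu
          rw [Finset.sum_range_succ, ih (Nat.le_of_lt hu'), add_comm]
          exact Finset.sum_Ioc_consecutive _ (hrmono u hu') (hrtop u (Nat.le_of_lt hu'))
    have h0 : (R 0).card = N := by rw [hR0]; exact Finset.card_univ
    have hT : (R T).card = 0 := by rw [hRT]; exact Finset.card_empty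
    rw [haux T (le_refl T), h0, hT]
  -- counting bound
  have count : ∑ x ∈ Finset.Ioc 0 N, w (⌈α * (x : ℝ)⌉₊ - 1) ≤
      (1/α) * ∑ j ∈ Finset.range N, w j := by
    set f : ℕ → ℕ := fun x => ⌈α * ((x : ℝ) + 1)⌉₊ - 1 with hf
    have hshift : ∑ x ∈ Finset.Ioc 0 N, w (⌈α * (x : ℝ)⌉₊ - 1) = ∑ x ∈ Finset.range N, w (f x) := by
      apply Finset.sum_nbij' (i := fun x => x - 1) (j := fun x => x + 1)
      · intro x hx
        rw [Finset.mem_Ioc] at hx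
        rw [Finset.mem_range]
        omega
      · intro x hx
        rw [Finset.mem_range] at hx
        rw [Finset.mem_Ioc]
        omega
      · intro x hx
        rw [Finset.mem_Ioc] at hx
        omega
      · intro x hx; rfl
      · intro x hx
        rw [Finset.mem_Ioc] at hx
        have : ((x - 1 : ℕ) : ℝ) + 1 = (x : ℝ) := by
          have : 1 ≤ x := hx.1
          push_cast [this]
          ring
        rw [hf]
        simp only [this]
    rw [hshift]
    -- ceiling bound facts
    have hfceil : ∀ x : ℕ, 1 ≤ ⌈α * ((x : ℝ) + 1)⌉₊ := by
      intro x
      rw [Nat.one_le_ceil_iff]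
      positivity
    have hmaps : ∀ x ∈ Finset.range N, f x ∈ Finset.range N := by
      intro x hx
      rw [Finset.mem_range] at hx ⊢
      have h1 : ⌈α * ((x : ℝ) + 1)⌉₊ ≤ x + 1 := by
        rw [Nat.ceil_le]
        push_cast
        nlinarith [hα1, hα0]
      have h2 := hfceil x
      have h3 : f x = ⌈α * ((x : ℝ) + 1)⌉₊ - 1 := rfl
      omega
    have hfib : ∑ x ∈ Finset.range N, w (f x)
        = ∑ j ∈ Finset.range N, ((Finset.range N).filter (fun x => f x = j)).card • w j := by
      rw [← Finset.sum_fiberwise_of_maps_to hmaps (fun x => w (f x))]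
      apply Finset.sum_congr rfl
      intro j _
      rw [Finset.sum_congr rfl (fun x hx => by rw [(Finset.mem_filter.1 hx).2]),
        Finset.sum_const]
    rw [hfib]
    simp only [nsmul_eq_mul]
    apply pandora_abel (1/α) (fun j => (((Finset.range N).filter (fun x => f x = j)).card : ℝ)) w
      (fun j => by positivity) hw0 hwa
    -- prefix sums bound
    intro k
    have hcards : ∑ j ∈ Finset.range k, (((Finset.range N).filter (fun x => f x = j)).card : ℝ)
        = (((Finset.range N).filter (fun x => f x < k)).card : ℝ) := by
      rw [← Nat.cast_sum]
      congr 1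
      rw [Finset.card_eq_sum_card_fiberwise
        (f := f) (t := Finset.range k) (fun x hx => Finset.mem_range.2 (Finset.mem_filter.1 hx).2)]
      apply Finset.sum_congr rfl
      intro j hj
      have hjk := Finset.mem_range.1 hj
      congr 1
      ext x
      simp only [Finset.mem_filter, Finset.mem_range]
      omega
    rw [hcards]
    have hsub : (Finset.range N).filter (fun x => f x < k) ⊆ Finset.range ⌊(k : ℝ)/α⌋₊ := by
      intro x hx
      obtain ⟨-, hfx⟩ := Finset.mem_filter.1 hx
      have h1 : ⌈α * ((x : ℝ) + 1)⌉₊ ≤ k := by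
        have h2 := hfceil x
        have h3 : f x = ⌈α * ((x : ℝ) + 1)⌉₊ - 1 := rfl
        omega
      rw [Nat.ceil_le] at h1
      have h2 : ((x : ℝ) + 1) ≤ (k : ℝ)/α := by
        rw [le_div_iff₀ hα0]
        linarith [h1]
      have h3 : (x + 1 : ℕ) ≤ ⌊(k : ℝ)/α⌋₊ := by
        apply Nat.le_floor
        push_cast
        exact h2
      rw [Finset.mem_range]
      omega
    calc (((Finset.range N).filter (fun x => f x < k)).card : ℝ)
        ≤ (⌊(k : ℝ)/α⌋₊ : ℝ) := by
          have h4 := Finset.card_le_card hsub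
          rw [Finset.card_range] at h4
          exact_mod_cast h4
      _ ≤ (k : ℝ)/α := Nat.floor_le (by positivity)
      _ = 1/α * k := by ring
  -- put everything together
  have hchain : ∑ t ∈ Finset.range T, (cst t (bx t) * (R t).card + ∑ s ∈ A t, v (bx t) s) ≤
      (2 + sq2) * ((1/α) * ∑ j ∈ Finset.range N, w j) := by
    calc ∑ t ∈ Finset.range T, (cst t (bx t) * (R t).card + ∑ s ∈ A t, v (bx t) s)
        ≤ ∑ t ∈ Finset.range T, (2 + sq2) * (((A t).card : ℝ) * w (⌈α * ((R t).card : ℝ)⌉₊ - 1)) := by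
          apply Finset.sum_le_sum
          intro t ht
          have := key t (Finset.mem_range.1 ht)
          linarith [this]
      _ ≤ ∑ t ∈ Finset.range T, (2 + sq2) * (∑ x ∈ Finset.Ioc ((R (t+1)).card) ((R t).card), w (⌈α * (x : ℝ)⌉₊ - 1)) := by
          apply Finset.sum_le_sum
          intro t ht
          apply mul_le_mul_of_nonneg_left (step2 t (Finset.mem_range.1 ht)) (by linarith)
      _ = (2 + sq2) * ∑ x ∈ Finset.Ioc 0 N, w (⌈α * (x : ℝ)⌉₊ - 1) := by
          rw [← Finset.mul_sum, tele]
      _ ≤ (2 + sq2) * ((1/α) * ∑ j ∈ Finset.range N, w j) := by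
          apply mul_le_mul_of_nonneg_left count (by linarith)
  have hconst : (2 + sq2) * (1/α) = 3 + 2 * sq2 := by
    have hαne : α ≠ 0 := ne_of_gt hα0
    rw [hα] at hαne ⊢
    field_simp
    nlinarith [hsq2sq]
  calc ∑ t ∈ Finset.range T, (cst t (bx t) * (R t).card + ∑ s ∈ A t, v (bx t) s)
      ≤ (2 + sq2) * ((1/α) * ∑ j ∈ Finset.range N, w j) := hchain
    _ = (3 + 2 * sq2) * ∑ s, o s := by rw [← mul_assoc, hconst, hwsum]
    _ = (3 + 2 * sq2) * ∑ s, (optOpenCost c π τ s + optValue v π τ s) := rfl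
end

section
/- For every Pandora's Box instance with a finite scenario set and every run of Weitzman's rule with full updates (Algorithm 3, with any choice of minimizers at each state), the algorithm's total cost satisfies ALG ≤ (3 + 2√2) · OPT, where OPT is the minimum total cost over all partially-adaptive solutions. -/
open scoped Classical
open Finset MeasureTheory
set_option linter.unusedSectionVars false
set_option linter.unusedVariables false
set_option linter.unusedTactic false
set_option maxHeartbeats 1000000

/-- In the tree of states built by Algorithm 3 (full updates), `fullPath v bx A s k` is
the set of scenarios still consistent with scenario `s` at depth `k`: the root state is
all scenarios, and the child containing `s` consists of the uncovered scenarios whose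
value in the opened box `bx R` agrees with that of `s`. -/
noncomputable def fullPath {B S : Type*} [Fintype S] [DecidableEq S]
    (v : B → S → ℝ) (bx : Finset S → B) (A : Finset S → Finset S) (s : S) : ℕ → Finset S
  | 0 => Finset.univ
  | k + 1 =>
      (fullPath v bx A s k \ A (fullPath v bx A s k)).filter
        (fun s' => v (bx (fullPath v bx A s k)) s' = v (bx (fullPath v bx A s k)) s)

/-- The vector of (residual) opening costs at the state of depth `k` on scenario `s`'s
root-to-leaf path: initially the original costs, and the cost of each opened box is set
to `0` in its children. -/
noncomputable def fullCostAt {B S : Type*} [Fintype S] [DecidableEq S] [DecidableEq B]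
    (c : B → ℝ) (v : B → S → ℝ) (bx : Finset S → B) (A : Finset S → Finset S)
    (s : S) : ℕ → B → ℝ
  | 0 => c
  | k + 1 => Function.update (fullCostAt c v bx A s k) (bx (fullPath v bx A s k)) 0

section Basic
variable {B S : Type*} [Fintype S] [DecidableEq S] [DecidableEq B]
  (c : B → ℝ) (v : B → S → ℝ) (bx : Finset S → B) (A : Finset S → Finset S)

lemma fullPath_succ_subset (s : S) (k : ℕ) :
    fullPath v bx A s (k+1) ⊆ fullPath v bx A s k := by
  intro x hx
  rw [fullPath] at hx
  exact (Finset.mem_sdiff.1 (Finset.mem_filter.1 hx).1).1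

lemma fullPath_anti (s : S) {j k : ℕ} (h : j ≤ k) :
    fullPath v bx A s k ⊆ fullPath v bx A s j := by
  induction k with
  | zero => simp_all
  | succ k ih =>
    rcases Nat.lt_or_ge j (k+1) with h' | h'
    · exact (fullPath_succ_subset v bx A s k).trans (ih (Nat.lt_succ_iff.1 h'))
    · have : j = k + 1 := le_antisymm h h'
      subst this; exact subset_rfl

lemma fullPath_eq_of_mem (s s' : S) (k : ℕ) (h : s' ∈ fullPath v bx A s k) :
    ∀ j ≤ k, fullPath v bx A s' j = fullPath v bx A s j := by
  induction k with
  | zero => intro j hj; interval_cases j; rfl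
  | succ k ih =>
    have hk : s' ∈ fullPath v bx A s k := fullPath_succ_subset v bx A s k h
    intro j hj
    rcases Nat.lt_or_ge j (k+1) with h' | h'
    · exact ih hk j (Nat.lt_succ_iff.1 h')
    · have : j = k + 1 := le_antisymm hj h'
      subst this
      rw [fullPath] at h
      have hval : v (bx (fullPath v bx A s k)) s' = v (bx (fullPath v bx A s k)) s :=
        (Finset.mem_filter.1 h).2
      rw [fullPath, fullPath, ih hk k le_rfl, hval]

lemma fullCostAt_eq_of_mem (s s' : S) (k : ℕ) (h : s' ∈ fullPath v bx A s k) :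
    ∀ j ≤ k, fullCostAt c v bx A s' j = fullCostAt c v bx A s j := by
  intro j hj
  induction j with
  | zero => rfl
  | succ j ihj =>
    have hj' : j ≤ k := Nat.le_of_succ_le hj
    rw [fullCostAt, fullCostAt, ihj hj', fullPath_eq_of_mem v bx A s s' k h j hj']

lemma fullCostAt_nonneg (hc : ∀ b, 0 ≤ c b) (s : S) (k : ℕ) (b : B) :
    0 ≤ fullCostAt c v bx A s k b := by
  induction k with
  | zero => exact hc b
  | succ k ih =>
    rw [fullCostAt, Function.update]
    split <;> simp_all

lemma fullCostAt_le (hc : ∀ b, 0 ≤ c b) (s : S) (k : ℕ) (b : B) :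
    fullCostAt c v bx A s k b ≤ c b := by
  induction k with
  | zero => exact le_rfl
  | succ k ih =>
    rw [fullCostAt, Function.update]
    split
    · next h => subst h; exact hc _
    · exact ih

end Basic

noncomputable def quantQ {S : Type*} [DecidableEq S] (g : S → ℝ) (T : Finset S) (m : ℕ) : ℝ :=
  if h : ((T.image g).filter fun y => m ≤ (T.filter fun s => g s ≤ y).card).Nonempty
  then ((T.image g).filter fun y => m ≤ (T.filter fun s => g s ≤ y).card).min' h
  else 0

section Quant
variable {S : Type*} [DecidableEq S] (g : S → ℝ) (T : Finset S) (m : ℕ)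

lemma quantF_nonempty (hT : T.Nonempty) (hm2 : m ≤ T.card) :
    ((T.image g).filter fun y => m ≤ (T.filter fun s => g s ≤ y).card).Nonempty := by
  refine ⟨(T.image g).max' (hT.image g), Finset.mem_filter.2 ⟨Finset.max'_mem _ _, ?_⟩⟩
  have : T.filter (fun s => g s ≤ (T.image g).max' (hT.image g)) = T := by
    apply Finset.filter_true_of_mem
    intro s hs
    exact Finset.le_max' _ _ (Finset.mem_image_of_mem g hs)
  rw [this]; exact hm2

lemma quantQ_spec (hT : T.Nonempty) (hm2 : m ≤ T.card) :
    quantQ g T m ∈ T.image g ∧ m ≤ (T.filter fun s => g s ≤ quantQ g T m).card := by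
  rw [quantQ, dif_pos (quantF_nonempty g T m hT hm2)]
  have := Finset.min'_mem _ (quantF_nonempty g T m hT hm2)
  exact ⟨(Finset.mem_filter.1 this).1, (Finset.mem_filter.1 this).2⟩

lemma quantQ_lt_card (hT : T.Nonempty) (hm1 : 1 ≤ m) (hm2 : m ≤ T.card) :
    (T.filter fun s => g s < quantQ g T m).card < m := by
  by_contra hcon
  push_neg at hcon
  set q := quantQ g T m with hq
  set U := T.filter fun s => g s < q with hU
  have hUne : U.Nonempty := Finset.card_pos.1 (lt_of_lt_of_le hm1 hcon)
  obtain ⟨u, hu, humax⟩ := Finset.exists_max_image U g hUne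
  set y' := g u with hy'
  have hy'q : y' < q := (Finset.mem_filter.1 hu).2
  have hy'F : y' ∈ (T.image g).filter fun y => m ≤ (T.filter fun s => g s ≤ y).card := by
    refine Finset.mem_filter.2 ⟨?_, ?_⟩
    · exact Finset.mem_image_of_mem g (Finset.filter_subset _ _ hu)
    · refine le_trans hcon (Finset.card_le_card ?_)
      intro x hx
      exact Finset.mem_filter.2 ⟨Finset.filter_subset _ _ hx, humax x hx⟩
  have : q ≤ y' := by
    rw [hq, quantQ, dif_pos (quantF_nonempty g T m hT hm2)]
    exact Finset.min'_le _ _ hy'F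
  linarith

lemma quantQ_card_ge (hT : T.Nonempty) (hm1 : 1 ≤ m) (hm2 : m ≤ T.card) :
    T.card + 1 ≤ (T.filter fun s => quantQ g T m ≤ g s).card + m := by
  have h1 := quantQ_lt_card g T m hT hm1 hm2
  have h2 : (T.filter fun s => quantQ g T m ≤ g s).card
      + (T.filter fun s => g s < quantQ g T m).card = T.card := by
    rw [← Finset.card_filter_add_card_filter_not
      (s := T) (p := fun s => quantQ g T m ≤ g s)]
    congr 1
    apply Finset.card_bij (fun a _ => a) <;> intro a ha <;>
      simp only [Finset.mem_filter, not_le] at * <;> tauto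
  omega

end Quant

lemma indicator_integral (a M : ℝ) (h0 : 0 ≤ a) (hM : a ≤ M) :
    ∫ t in Set.Ioc (0:ℝ) M, (Set.Iic a).indicator (fun _ => (1:ℝ)) t = a := by
  rw [MeasureTheory.setIntegral_indicator measurableSet_Iic]
  have : Set.Ioc (0:ℝ) M ∩ Set.Iic a = Set.Ioc 0 a := by
    ext x; simp only [Set.mem_inter_iff, Set.mem_Ioc, Set.mem_Iic]
    constructor
    · rintro ⟨⟨h1, h2⟩, h3⟩; exact ⟨h1, h3⟩
    · rintro ⟨h1, h2⟩; exact ⟨⟨h1, le_trans h2 hM⟩, h2⟩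
  rw [this]
  simp [Real.volume_Ioc, h0]

lemma indicator_integrableOn (a M : ℝ) :
    IntegrableOn ((Set.Iic a).indicator (fun _ => (1:ℝ))) (Set.Ioc (0:ℝ) M) volume := by
  apply MeasureTheory.Integrable.indicator _ measurableSet_Iic
  exact integrableOn_const (by simp [Real.volume_Ioc])

lemma layer_cake {S : Type*} [Fintype S] (h g : S → ℝ) (hh : ∀ s, 0 ≤ h s)
    (hg : ∀ s, 0 ≤ g s) (κ : ℝ) (hκ : 0 ≤ κ)
    (H : ∀ t : ℝ, 0 < t →
      ((Finset.univ.filter (fun s => t ≤ h s)).card : ℝ) ≤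
        κ * ((Finset.univ.filter (fun s => t ≤ g s)).card : ℝ)) :
    ∑ s, h s ≤ κ * ∑ s, g s := by
  set M : ℝ := (∑ s, h s) + (∑ s, g s) + 1 with hMdef
  have hsums_h : ∀ s, h s ≤ ∑ s', h s' := fun s =>
    Finset.single_le_sum (fun i _ => hh i) (Finset.mem_univ s)
  have hsums_g : ∀ s, g s ≤ ∑ s', g s' := fun s =>
    Finset.single_le_sum (fun i _ => hg i) (Finset.mem_univ s)
  have hgsum : 0 ≤ ∑ s', g s' := Finset.sum_nonneg (fun i _ => hg i)
  have hhsum : 0 ≤ ∑ s', h s' := Finset.sum_nonneg (fun i _ => hh i)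
  have hMh : ∀ s, h s ≤ M := fun s => by
    have := hsums_h s; simp only [hMdef]; linarith
  have hMg : ∀ s, g s ≤ M := fun s => by
    have := hsums_g s; simp only [hMdef]; linarith
  have key_h : ∑ s, h s = ∫ t in Set.Ioc (0:ℝ) M,
      ∑ s, (Set.Iic (h s)).indicator (fun _ => (1:ℝ)) t := by
    rw [MeasureTheory.integral_finset_sum]
    · exact Finset.sum_congr rfl (fun s _ => (indicator_integral _ _ (hh s) (hMh s)).symm)
    · exact fun s _ => indicator_integrableOn _ _
  have key_g : ∑ s, g s = ∫ t in Set.Ioc (0:ℝ) M,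
      ∑ s, (Set.Iic (g s)).indicator (fun _ => (1:ℝ)) t := by
    rw [MeasureTheory.integral_finset_sum]
    · exact Finset.sum_congr rfl (fun s _ => (indicator_integral _ _ (hg s) (hMg s)).symm)
    · exact fun s _ => indicator_integrableOn _ _
  rw [key_h, key_g, ← MeasureTheory.integral_const_mul]
  apply MeasureTheory.setIntegral_mono_on
  · exact MeasureTheory.integrable_finset_sum _ (fun s _ => indicator_integrableOn _ _)
  · exact (MeasureTheory.integrable_finset_sum _
      (fun s _ => indicator_integrableOn (g s) M)).const_mul κ
  · exact measurableSet_Ioc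
  · intro t ht
    have hcount : ∀ f : S → ℝ, ∑ s, (Set.Iic (f s)).indicator (fun _ => (1:ℝ)) t =
        ((Finset.univ.filter (fun s => t ≤ f s)).card : ℝ) := by
      intro f
      rw [← Finset.sum_boole]
      exact Finset.sum_congr rfl (fun s _ => by
        simp [Set.indicator_apply, Set.mem_Iic])
    rw [hcount, hcount]
    exact H t ht.1

section Tree
variable {B S : Type*} [Fintype S] [DecidableEq S]
  (v : B → S → ℝ) (bx : Finset S → B) (A : Finset S → Finset S)
variable (d : S → ℕ)
  (hnotcov : ∀ s : S, ∀ k < d s, s ∉ A (fullPath v bx A s k))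
  (hcov : ∀ s : S, s ∈ A (fullPath v bx A s (d s)))
  (hAsub : ∀ s : S, ∀ k ≤ d s, A (fullPath v bx A s k) ⊆ fullPath v bx A s k)

include hnotcov in
lemma mem_fullPath_self (s : S) {k : ℕ} (hk : k ≤ d s) : s ∈ fullPath v bx A s k := by
  induction k with
  | zero => exact Finset.mem_univ s
  | succ k ih =>
    rw [fullPath]
    refine Finset.mem_filter.2 ⟨Finset.mem_sdiff.2 ⟨ih (Nat.le_of_succ_le hk), ?_⟩, rfl⟩
    exact hnotcov s k (Nat.lt_of_succ_le hk)

include hcov in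
lemma depth_le (s : S) {k : ℕ} (h : s ∈ fullPath v bx A s k) : k ≤ d s := by
  by_contra hcon
  push_neg at hcon
  have h1 : s ∈ fullPath v bx A s (d s + 1) := fullPath_anti v bx A s hcon h
  rw [fullPath] at h1
  exact (Finset.mem_sdiff.1 (Finset.mem_filter.1 h1).1).2 (hcov s)

include hnotcov hcov hAsub in
lemma cov_here (s s' : S) {k : ℕ} (hk : k ≤ d s) (h : s' ∈ A (fullPath v bx A s k)) :
    d s' = k ∧ fullPath v bx A s k = fullPath v bx A s' (d s') := by
  have hmem : s' ∈ fullPath v bx A s k := hAsub s k hk h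
  have hEq : fullPath v bx A s' k = fullPath v bx A s k :=
    fullPath_eq_of_mem v bx A s s' k hmem k le_rfl
  have hself : s' ∈ fullPath v bx A s' k := hEq ▸ hmem
  have hle : k ≤ d s' := depth_le v bx A d hcov s' hself
  have : ¬ k < d s' := fun hlt => hnotcov s' k hlt (hEq ▸ h)
  have hdk : d s' = k := le_antisymm (not_lt.1 this) hle
  exact ⟨hdk, by rw [hdk, hEq]⟩

include hcov in
lemma mem_covstate (s s' : S) (h : s ∈ fullPath v bx A s' (d s')) :
    d s' ≤ d s ∧ s' ∈ A (fullPath v bx A s (d s')) ∧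
      fullPath v bx A s (d s') = fullPath v bx A s' (d s') := by
  have hEq : fullPath v bx A s (d s') = fullPath v bx A s' (d s') :=
    fullPath_eq_of_mem v bx A s' s (d s') h (d s') le_rfl
  have hself : s ∈ fullPath v bx A s (d s') := hEq ▸ h
  exact ⟨depth_le v bx A d hcov s hself, hEq ▸ hcov s', hEq⟩

variable (hAne : ∀ s : S, ∀ k ≤ d s, (A (fullPath v bx A s k)).Nonempty)

include hnotcov hcov hAsub hAne in
lemma accounting_c [Fintype B] (F : S → ℕ → ℝ)
    (hF : ∀ s s' k, s' ∈ fullPath v bx A s k → F s k = F s' k) :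
    ∑ s, ∑ k ∈ Finset.range (d s + 1), F s k =
      ∑ s', F s' (d s') * (fullPath v bx A s' (d s')).card /
        (A (fullPath v bx A s' (d s'))).card := by
  have step1 : ∀ s : S, ∀ k ≤ d s, F s k =
      ∑ s' : S, (if s' ∈ A (fullPath v bx A s k)
        then F s k / (A (fullPath v bx A s k)).card else 0) := by
    intro s k hk
    rw [Finset.sum_ite_mem, Finset.univ_inter, Finset.sum_const, nsmul_eq_mul]
    have hpos : (0:ℝ) < (A (fullPath v bx A s k)).card := by
      exact_mod_cast Finset.card_pos.2 (hAne s k hk)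
    field_simp
  calc ∑ s, ∑ k ∈ Finset.range (d s + 1), F s k
      = ∑ s, ∑ k ∈ Finset.range (d s + 1), ∑ s' : S,
          (if s' ∈ A (fullPath v bx A s k)
            then F s k / (A (fullPath v bx A s k)).card else 0) := by
        refine Finset.sum_congr rfl (fun s _ => Finset.sum_congr rfl (fun k hk => ?_))
        exact step1 s k (Nat.lt_succ_iff.1 (Finset.mem_range.1 hk))
    _ = ∑ s' : S, ∑ s : S, ∑ k ∈ Finset.range (d s + 1),
          (if s' ∈ A (fullPath v bx A s k)
            then F s k / (A (fullPath v bx A s k)).card else 0) := by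
        rw [show (∑ s : S, ∑ k ∈ Finset.range (d s + 1), ∑ s' : S,
          (if s' ∈ A (fullPath v bx A s k)
            then F s k / ((A (fullPath v bx A s k)).card : ℝ) else 0)) =
          ∑ s : S, ∑ s' : S, ∑ k ∈ Finset.range (d s + 1),
          (if s' ∈ A (fullPath v bx A s k)
            then F s k / ((A (fullPath v bx A s k)).card : ℝ) else 0) from
          Finset.sum_congr rfl (fun s _ => Finset.sum_comm)]
        exact Finset.sum_comm
    _ = ∑ s' : S, ∑ s : S, (if s ∈ fullPath v bx A s' (d s')
          then F s' (d s') / (A (fullPath v bx A s' (d s'))).card else 0) := by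
        refine Finset.sum_congr rfl (fun s' _ => Finset.sum_congr rfl (fun s _ => ?_))
        by_cases hs : s ∈ fullPath v bx A s' (d s')
        · rw [if_pos hs]
          obtain ⟨hdle, hsA, hEq⟩ := mem_covstate v bx A d hcov s s' hs
          rw [Finset.sum_eq_single_of_mem (d s')
            (Finset.mem_range.2 (Nat.lt_succ_of_le hdle))
            (fun k hk hne => if_neg (fun hmem => hne (cov_here v bx A d hnotcov hcov hAsub s s'
              (Nat.lt_succ_iff.1 (Finset.mem_range.1 hk)) hmem).1.symm))]
          rw [if_pos hsA, hEq, hF s' s (d s') hs]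
        · rw [if_neg hs]
          refine Finset.sum_eq_zero (fun k hk => ?_)
          rw [if_neg]
          intro hmem
          have hkle := Nat.lt_succ_iff.1 (Finset.mem_range.1 hk)
          obtain ⟨hdk, hEq⟩ := cov_here v bx A d hnotcov hcov hAsub s s' hkle hmem
          exact hs (hEq ▸ mem_fullPath_self v bx A d hnotcov s hkle)
    _ = ∑ s', F s' (d s') * (fullPath v bx A s' (d s')).card /
          (A (fullPath v bx A s' (d s'))).card := by
        refine Finset.sum_congr rfl (fun s' _ => ?_)
        rw [Finset.sum_ite_mem, Finset.univ_inter, Finset.sum_const, nsmul_eq_mul]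
        ring

include hnotcov hcov hAsub hAne in
lemma accounting_v (f : S → ℝ) :
    ∑ s, f s = ∑ s', (∑ x ∈ A (fullPath v bx A s' (d s')), f x) /
        (A (fullPath v bx A s' (d s'))).card := by
  have key : ∀ x s' : S,
      (x ∈ A (fullPath v bx A s' (d s'))) ↔ (s' ∈ A (fullPath v bx A x (d x))) := by
    intro x s'
    constructor
    · intro h
      obtain ⟨hdx, hEq⟩ := cov_here v bx A d hnotcov hcov hAsub s' x le_rfl h
      rw [← hEq]
      exact hcov s'
    · intro h
      obtain ⟨hdx, hEq⟩ := cov_here v bx A d hnotcov hcov hAsub x s' le_rfl h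
      rw [← hEq]
      exact hcov x
  have keyEq : ∀ x s' : S, x ∈ A (fullPath v bx A s' (d s')) →
      A (fullPath v bx A s' (d s')) = A (fullPath v bx A x (d x)) := by
    intro x s' h
    obtain ⟨hdx, hEq⟩ := cov_here v bx A d hnotcov hcov hAsub s' x le_rfl h
    rw [hEq]
  calc ∑ s, f s = ∑ x, f x := rfl
    _ = ∑ x : S, ∑ s' : S, (if x ∈ A (fullPath v bx A s' (d s'))
          then f x / ((A (fullPath v bx A x (d x))).card : ℝ) else 0) := by
        refine Finset.sum_congr rfl (fun x _ => ?_)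
        have : ∀ s' : S, (if x ∈ A (fullPath v bx A s' (d s'))
            then f x / ((A (fullPath v bx A x (d x))).card : ℝ) else 0) =
            (if s' ∈ A (fullPath v bx A x (d x))
            then f x / ((A (fullPath v bx A x (d x))).card : ℝ) else 0) := by
          intro s'; rw [if_congr (key x s') rfl rfl]
        rw [Finset.sum_congr rfl (fun s' _ => this s'), Finset.sum_ite_mem,
          Finset.univ_inter, Finset.sum_const, nsmul_eq_mul]
        have hpos : (0:ℝ) < (A (fullPath v bx A x (d x))).card := by
          exact_mod_cast Finset.card_pos.2 (hAne x (d x) le_rfl)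
        field_simp
    _ = ∑ s' : S, ∑ x : S, (if x ∈ A (fullPath v bx A s' (d s'))
          then f x / ((A (fullPath v bx A x (d x))).card : ℝ) else 0) := Finset.sum_comm
    _ = ∑ s', (∑ x ∈ A (fullPath v bx A s' (d s')), f x) /
        (A (fullPath v bx A s' (d s'))).card := by
        refine Finset.sum_congr rfl (fun s' _ => ?_)
        rw [Finset.sum_ite_mem, Finset.univ_inter, Finset.sum_div]
        refine Finset.sum_congr rfl (fun x hx => ?_)
        rw [← keyEq x s' hx]
end Tree

section PerScen
variable {B S : Type*} [Fintype B] [Fintype S] [Nonempty B] [Nonempty S]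
    [DecidableEq B] [DecidableEq S]

lemma perScenario
    (c : B → ℝ) (hc : ∀ b, 0 ≤ c b) (v : B → S → ℝ) (hv : ∀ b s, 0 ≤ v b s)
    (bx : Finset S → B) (A : Finset S → Finset S) (d : S → ℕ)
    (hmin : ∀ s : S, ∀ k ≤ d s, ∀ b' : B, ∀ A' : Finset S,
      A' ⊆ fullPath v bx A s k → A'.Nonempty →
      (fullCostAt c v bx A s k (bx (fullPath v bx A s k)) * (fullPath v bx A s k).card +
          ∑ x ∈ A (fullPath v bx A s k), v (bx (fullPath v bx A s k)) x) /
        (A (fullPath v bx A s k)).card ≤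
      (fullCostAt c v bx A s k b' * (fullPath v bx A s k).card + ∑ x ∈ A', v b' x) /
        A'.card)
    (hnotcov : ∀ s : S, ∀ k < d s, s ∉ A (fullPath v bx A s k))
    (π : Fin (Fintype.card B) ≃ B) (τ : S → Fin (Fintype.card B))
    (γ β δ : ℝ) (hγ0 : 0 < γ) (hγ1 : γ ≤ 1) (hβ0 : 0 < β) (hβ1 : β ≤ 1)
    (hδ : 0 < δ) (hδ2 : δ ≤ γ + β - 1) (s₀ : S) :
    (fullCostAt c v bx A s₀ (d s₀) (bx (fullPath v bx A s₀ (d s₀))) *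
        (fullPath v bx A s₀ (d s₀)).card +
        ∑ x ∈ A (fullPath v bx A s₀ (d s₀)), v (bx (fullPath v bx A s₀ (d s₀))) x) /
      (A (fullPath v bx A s₀ (d s₀))).card ≤
    quantQ (optOpenCost c π τ) (fullPath v bx A s₀ (d s₀))
        ⌈γ * (fullPath v bx A s₀ (d s₀)).card⌉₊ / δ +
      quantQ (optValue v π τ) (fullPath v bx A s₀ (d s₀))
        ⌈β * (fullPath v bx A s₀ (d s₀)).card⌉₊ := by
  set k := d s₀ with hkdef
  set R := fullPath v bx A s₀ k with hRdef
  have hs₀R : s₀ ∈ R := mem_fullPath_self v bx A d hnotcov s₀ le_rfl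
  have hRne : R.Nonempty := ⟨s₀, hs₀R⟩
  have hnpos : 0 < R.card := Finset.card_pos.2 hRne
  have hnposR : (0:ℝ) < R.card := by exact_mod_cast hnpos
  set n := R.card with hndef
  set m₁ := ⌈γ * (n:ℝ)⌉₊ with hm₁
  set m₂ := ⌈β * (n:ℝ)⌉₊ with hm₂
  have hm₁1 : 1 ≤ m₁ := Nat.one_le_iff_ne_zero.2 (by
    simp only [hm₁, ne_eq, Nat.ceil_eq_zero, not_le]
    positivity)
  have hm₁n : m₁ ≤ n := Nat.ceil_le.2 (by nlinarith)
  have hm₂1 : 1 ≤ m₂ := Nat.one_le_iff_ne_zero.2 (by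
    simp only [hm₂, ne_eq, Nat.ceil_eq_zero, not_le]
    positivity)
  have hm₂n : m₂ ≤ n := Nat.ceil_le.2 (by nlinarith)
  set copt := optOpenCost c π τ with hcopt
  set vopt := optValue v π τ with hvopt
  set y := quantQ copt R m₁ with hy
  set z := quantQ vopt R m₂ with hz
  have hcopt0 : ∀ s, 0 ≤ copt s := fun s =>
    Finset.sum_nonneg (fun i _ => hc (π i))
  have hvopt0 : ∀ s, 0 ≤ vopt s := by
    intro s
    obtain ⟨i, hi, hieq⟩ := Finset.exists_mem_eq_inf' (Finset.nonempty_Iic)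
      (fun i => v (π i) s)
    rw [hvopt, optValue, hieq]
    exact hv _ _
  have hy0 : 0 ≤ y := by
    obtain ⟨x, -, hx⟩ := Finset.mem_image.1 (quantQ_spec copt R m₁ hRne hm₁n).1
    rw [hy, ← hx]; exact hcopt0 x
  have hX : m₁ ≤ (R.filter fun s => copt s ≤ y).card := (quantQ_spec copt R m₁ hRne hm₁n).2
  have hY : m₂ ≤ (R.filter fun s => vopt s ≤ z).card := (quantQ_spec vopt R m₂ hRne hm₂n).2
  set D := R.filter (fun s => copt s ≤ y ∧ vopt s ≤ z) with hD
  have hDinter : D = (R.filter fun s => copt s ≤ y) ∩ (R.filter fun s => vopt s ≤ z) := by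
    rw [hD, ← Finset.filter_and]
  have hDcard : m₁ + m₂ ≤ n + D.card := by
    have h1 := Finset.card_union_add_card_inter
      (R.filter fun s => copt s ≤ y) (R.filter fun s => vopt s ≤ z)
    have h2 : ((R.filter fun s => copt s ≤ y) ∪ (R.filter fun s => vopt s ≤ z)).card ≤ n := by
      apply Finset.card_le_card
      intro x hx
      rcases Finset.mem_union.1 hx with h | h
      · exact Finset.filter_subset _ _ h
      · exact Finset.filter_subset _ _ h
    have h3 : ((R.filter fun s => copt s ≤ y) ∩ (R.filter fun s => vopt s ≤ z)).card
        = D.card := by rw [hDinter]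
    omega
  have hDlb : δ * n ≤ (D.card : ℝ) := by
    have h1 : γ * n ≤ (m₁ : ℝ) := Nat.le_ceil _
    have h2 : β * n ≤ (m₂ : ℝ) := Nat.le_ceil _
    have h3 : (m₁ : ℝ) + m₂ ≤ n + D.card := by exact_mod_cast hDcard
    nlinarith
  have hDpos : (0:ℝ) < D.card := lt_of_lt_of_le (by positivity) hDlb
  have hDne : D.Nonempty := Finset.card_pos.1 (by exact_mod_cast hDpos)
  -- max stopping index over D
  set jτ := (D.image τ).max' (hDne.image τ) with hjτ
  obtain ⟨sstar, hsstar, hsstarj⟩ := Finset.mem_image.1 (Finset.max'_mem _ (hDne.image τ))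
  have hτle : ∀ s ∈ D, τ s ≤ jτ := fun s hs =>
    Finset.le_max' _ _ (Finset.mem_image_of_mem τ hs)
  -- choice of minimizing index
  have hchoice : ∀ s : S, ∃ i, i ∈ Finset.Iic (τ s) ∧ vopt s = v (π i) s := by
    intro s
    obtain ⟨i, hi, hieq⟩ := Finset.exists_mem_eq_inf' (Finset.nonempty_Iic)
      (fun i => v (π i) s)
    exact ⟨i, hi, hieq⟩
  choose is his hiseq using hchoice
  have hmaps : ∀ s ∈ D, is s ∈ Finset.Iic jτ := by
    intro s hs
    exact Finset.mem_Iic.2 (le_trans (Finset.mem_Iic.1 (his s)) (hτle s hs))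
  set σ := (fullCostAt c v bx A s₀ k (bx R) * (n:ℝ) +
      ∑ x ∈ A R, v (bx R) x) / (A R).card with hσ
  have hkey : σ * D.card ≤ (∑ i ∈ Finset.Iic jτ, c (π i)) * n + ∑ s ∈ D, vopt s := by
    have hfib : ∑ i ∈ Finset.Iic jτ, ∑ s ∈ D.filter (fun s => is s = i), σ
        = σ * D.card := by
      rw [Finset.sum_fiberwise_of_maps_to hmaps, Finset.sum_const, nsmul_eq_mul, mul_comm]
    rw [← hfib]
    have hperi : ∀ i ∈ Finset.Iic jτ, ∑ s ∈ D.filter (fun s => is s = i), σ ≤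
        c (π i) * n + ∑ s ∈ D.filter (fun s => is s = i), vopt s := by
      intro i hi
      set Di := D.filter (fun s => is s = i) with hDi
      by_cases hDiE : Di.Nonempty
      · have hsub : Di ⊆ R := (Finset.filter_subset _ _).trans (Finset.filter_subset _ _)
        have := hmin s₀ k le_rfl (π i) Di hsub hDiE
        rw [← hσ] at this
        have hDipos : (0:ℝ) < Di.card := by
          exact_mod_cast Finset.card_pos.2 hDiE
        have h2 : σ * Di.card ≤ fullCostAt c v bx A s₀ k (π i) * n + ∑ x ∈ Di, v (π i) x :=
          (le_div_iff₀ hDipos).1 this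
        have h3 : ∑ x ∈ Di, v (π i) x = ∑ x ∈ Di, vopt x := by
          refine Finset.sum_congr rfl (fun x hx => ?_)
          have : is x = i := (Finset.mem_filter.1 hx).2
          rw [← this, ← hiseq x]
        rw [Finset.sum_const, nsmul_eq_mul, mul_comm]
        calc σ * Di.card ≤ _ := h2
          _ ≤ c (π i) * n + ∑ x ∈ Di, v (π i) x := by
            have := fullCostAt_le c v bx A hc s₀ k (π i)
            nlinarith
          _ = c (π i) * n + ∑ s ∈ Di, vopt s := by rw [h3]
      · rw [Finset.not_nonempty_iff_eq_empty.1 hDiE]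
        simp only [Finset.sum_empty, add_zero]
        exact mul_nonneg (hc _) (Nat.cast_nonneg _)
    calc ∑ i ∈ Finset.Iic jτ, ∑ s ∈ D.filter (fun s => is s = i), σ
        ≤ ∑ i ∈ Finset.Iic jτ, (c (π i) * n + ∑ s ∈ D.filter (fun s => is s = i), vopt s) :=
          Finset.sum_le_sum hperi
      _ = (∑ i ∈ Finset.Iic jτ, c (π i)) * n +
          ∑ i ∈ Finset.Iic jτ, ∑ s ∈ D.filter (fun s => is s = i), vopt s := by
          rw [Finset.sum_add_distrib, Finset.sum_mul]
      _ = (∑ i ∈ Finset.Iic jτ, c (π i)) * n + ∑ s ∈ D, vopt s := by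
          rw [Finset.sum_fiberwise_of_maps_to hmaps]
  have hCj : ∑ i ∈ Finset.Iic jτ, c (π i) ≤ y := by
    have : ∑ i ∈ Finset.Iic jτ, c (π i) = copt sstar := by
      rw [hcopt, optOpenCost, hsstarj]
    rw [this]
    exact ((Finset.mem_filter.1 hsstar).2).1
  have hvz : ∑ s ∈ D, vopt s ≤ z * D.card := by
    rw [mul_comm]
    calc ∑ s ∈ D, vopt s ≤ ∑ s ∈ D, z :=
        Finset.sum_le_sum (fun s hs => ((Finset.mem_filter.1 hs).2).2)
      _ = D.card * z := by rw [Finset.sum_const, nsmul_eq_mul]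
  have hfinal : σ * D.card ≤ y * n + z * D.card := by
    calc σ * D.card ≤ _ := hkey
      _ ≤ y * n + z * D.card := by nlinarith
  -- conclude
  have hyn : y * n ≤ (y / δ) * D.card := by
    rw [div_mul_eq_mul_div, le_div_iff₀ hδ]
    nlinarith
  have : σ * D.card ≤ (y / δ + z) * D.card := by nlinarith
  have := le_of_mul_le_mul_right (by linarith [this] : σ * D.card ≤ (y / δ + z) * D.card) hDpos
  exact this
end PerScen

section Heavy
variable {B S : Type*} [Fintype S] [DecidableEq S]

lemma heavy_count (v : B → S → ℝ) (bx : Finset S → B) (A : Finset S → Finset S) (d : S → ℕ)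
    (hnotcov : ∀ s : S, ∀ k < d s, s ∉ A (fullPath v bx A s k))
    (g : S → ℝ) (mfun : ℕ → ℕ) (ε : ℝ) (hε : 0 < ε)
    (hm1 : ∀ n, 1 ≤ n → 1 ≤ mfun n) (hmn : ∀ n, 1 ≤ n → mfun n ≤ n)
    (hquant : ∀ n : ℕ, 1 ≤ n → ε * n ≤ (n:ℝ) + 1 - mfun n) (t : ℝ) :
    ((Finset.univ.filter fun s : S => t ≤ quantQ g (fullPath v bx A s (d s))
        (mfun (fullPath v bx A s (d s)).card)).card : ℝ)
      ≤ (1/ε) * ((Finset.univ.filter fun s => t ≤ g s).card : ℝ) := by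
  set W := Finset.univ.filter fun s : S => t ≤ quantQ g (fullPath v bx A s (d s))
      (mfun (fullPath v bx A s (d s)).card) with hW
  set Fam := W.image (fun u => fullPath v bx A u (d u)) with hFam
  have hmemself : ∀ s : S, s ∈ fullPath v bx A s (d s) := fun s =>
    mem_fullPath_self v bx A d hnotcov s le_rfl
  -- laminarity
  have hlam : ∀ T ∈ Fam, ∀ T' ∈ Fam, ∀ x, x ∈ T → x ∈ T' → T ⊆ T' ∨ T' ⊆ T := by
    intro T hT T' hT' x hx hx'
    obtain ⟨u, -, rfl⟩ := Finset.mem_image.1 hT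
    obtain ⟨u', -, rfl⟩ := Finset.mem_image.1 hT'
    have h1 : fullPath v bx A x (d u) = fullPath v bx A u (d u) :=
      fullPath_eq_of_mem v bx A u x (d u) hx (d u) le_rfl
    have h2 : fullPath v bx A x (d u') = fullPath v bx A u' (d u') :=
      fullPath_eq_of_mem v bx A u' x (d u') hx' (d u') le_rfl
    rcases le_total (d u) (d u') with h | h
    · right; rw [← h1, ← h2]; exact fullPath_anti v bx A x h
    · left; rw [← h1, ← h2]; exact fullPath_anti v bx A x h
  -- heaviness
  have hheavy : ∀ T ∈ Fam, ε * (T.card : ℝ) ≤ ((T.filter fun x => t ≤ g x).card : ℝ) := by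
    intro T hT
    obtain ⟨u, hu, rfl⟩ := Finset.mem_image.1 hT
    set T := fullPath v bx A u (d u)
    have hTne : T.Nonempty := ⟨u, hmemself u⟩
    have hTc1 : 1 ≤ T.card := Finset.card_pos.2 hTne
    have hq : t ≤ quantQ g T (mfun T.card) := (Finset.mem_filter.1 hu).2
    have hge := quantQ_card_ge g T (mfun T.card) hTne (hm1 _ hTc1) (hmn _ hTc1)
    have hsub : (T.filter fun s => quantQ g T (mfun T.card) ≤ g s) ⊆
        (T.filter fun x => t ≤ g x) := by
      intro x hx
      exact Finset.mem_filter.2 ⟨(Finset.mem_filter.1 hx).1,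
        le_trans hq (Finset.mem_filter.1 hx).2⟩
    have hcard := Finset.card_le_card hsub
    have hq2 := hquant T.card hTc1
    have : (T.card : ℝ) + 1 ≤ ((T.filter fun s => quantQ g T (mfun T.card) ≤ g s).card : ℝ)
        + mfun T.card := by exact_mod_cast hge
    have : ((T.filter fun s => quantQ g T (mfun T.card) ≤ g s).card : ℝ) ≤
        ((T.filter fun x => t ≤ g x).card : ℝ) := by exact_mod_cast hcard
    linarith
  -- max assignment
  have hMaxEx : ∀ s : S, ∃ T : Finset S, s ∈ W →
      (T ∈ Fam ∧ s ∈ T ∧ ∀ T' ∈ Fam, s ∈ T' → T'.card ≤ T.card) := by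
    intro s
    by_cases hs : s ∈ W
    · have hFne : (Fam.filter (fun T => s ∈ T)).Nonempty :=
        ⟨fullPath v bx A s (d s), Finset.mem_filter.2
          ⟨Finset.mem_image_of_mem _ hs, hmemself s⟩⟩
      obtain ⟨T, hT, hTmax⟩ := Finset.exists_max_image _ (fun T => T.card) hFne
      exact ⟨T, fun _ => ⟨(Finset.mem_filter.1 hT).1, (Finset.mem_filter.1 hT).2,
        fun T' h1 h2 => hTmax T' (Finset.mem_filter.2 ⟨h1, h2⟩)⟩⟩
    · exact ⟨∅, fun h => absurd h hs⟩
  choose Max hMax using hMaxEx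
  -- distinct Max-values are disjoint
  have hdisj : ∀ s ∈ W, ∀ s' ∈ W, Max s ≠ Max s' → Disjoint (Max s) (Max s') := by
    intro s hs s' hs' hne
    rw [Finset.disjoint_left]
    intro x hx hx'
    obtain ⟨hFm, hsm, hmax⟩ := hMax s hs
    obtain ⟨hFm', hsm', hmax'⟩ := hMax s' hs'
    rcases hlam _ hFm _ hFm' x hx hx' with h | h
    · exact hne (Finset.eq_of_subset_of_card_le h (hmax _ hFm' (h hsm)))
    · exact hne (Finset.eq_of_subset_of_card_le h (hmax' _ hFm (h hsm'))).symm
  -- counting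
  set M := W.image Max with hM
  have hWsub : W ⊆ M.biUnion id := by
    intro s hs
    exact Finset.mem_biUnion.2 ⟨Max s, Finset.mem_image_of_mem _ hs, (hMax s hs).2.1⟩
  have hWcard : (W.card : ℝ) ≤ ∑ T ∈ M, (T.card : ℝ) := by
    have h1 : W.card ≤ (M.biUnion id).card := Finset.card_le_card hWsub
    have h2 : (M.biUnion id).card ≤ ∑ T ∈ M, T.card := Finset.card_biUnion_le
    have := le_trans h1 h2
    push_cast
    exact_mod_cast this
  have hMFam : ∀ T ∈ M, T ∈ Fam := by
    intro T hT
    obtain ⟨s, hs, rfl⟩ := Finset.mem_image.1 hT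
    exact (hMax s hs).1
  have hdisjM : ∀ T ∈ M, ∀ T' ∈ M, T ≠ T' → Disjoint T T' := by
    intro T hT T' hT' hne
    obtain ⟨s, hs, rfl⟩ := Finset.mem_image.1 hT
    obtain ⟨s', hs', rfl⟩ := Finset.mem_image.1 hT'
    exact hdisj s hs s' hs' hne
  have hsum2 : ∑ T ∈ M, ((T.filter fun x => t ≤ g x).card : ℝ) ≤
      ((Finset.univ.filter fun s => t ≤ g s).card : ℝ) := by
    have hcardUnion : ∑ T ∈ M, (T.filter fun x => t ≤ g x).card =
        (M.biUnion (fun T => T.filter fun x => t ≤ g x)).card := by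
      rw [Finset.card_biUnion]
      intro T hT T' hT' hne
      exact Finset.disjoint_filter_filter (hdisjM T hT T' hT' hne)
    have hsubG : (M.biUnion (fun T => T.filter fun x => t ≤ g x)) ⊆
        Finset.univ.filter fun s => t ≤ g s := by
      intro x hx
      obtain ⟨T, -, hxT⟩ := Finset.mem_biUnion.1 hx
      exact Finset.mem_filter.2 ⟨Finset.mem_univ x, (Finset.mem_filter.1 hxT).2⟩
    have := Finset.card_le_card hsubG
    calc ∑ T ∈ M, ((T.filter fun x => t ≤ g x).card : ℝ)
        = ((M.biUnion (fun T => T.filter fun x => t ≤ g x)).card : ℝ) := by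
          exact_mod_cast hcardUnion
      _ ≤ _ := by exact_mod_cast this
  calc (W.card : ℝ) ≤ ∑ T ∈ M, (T.card : ℝ) := hWcard
    _ ≤ ∑ T ∈ M, (1/ε) * ((T.filter fun x => t ≤ g x).card : ℝ) := by
        refine Finset.sum_le_sum (fun T hT => ?_)
        have h := hheavy T (hMFam T hT)
        rw [div_mul_eq_mul_div, le_div_iff₀ hε]
        linarith
    _ = (1/ε) * ∑ T ∈ M, ((T.filter fun x => t ≤ g x).card : ℝ) := by
        rw [Finset.mul_sum]
    _ ≤ (1/ε) * ((Finset.univ.filter fun s => t ≤ g s).card : ℝ) := by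
        have h1ε : 0 ≤ 1/ε := by positivity
        exact mul_le_mul_of_nonneg_left hsum2 h1ε
end Heavy

/-- Weitzman's rule with full updates (Algorithm 3) is a `(3 + 2√2)`-approximation
against the partially-adaptive optimal: for every run of the algorithm (any choice of
minimizing box `bx R` and scenario set `A R` at each reachable state) and every
partially-adaptive solution `(π, τ)`, the total cost of the algorithm — each scenario
pays the opening cost of the chosen box at every state on its root-to-covering path,
plus the value with which it is covered — is at most `(3 + 2√2)` times the total cost
of `(π, τ)`. -/
theorem weitzman_full_updates_approx
    {B S : Type*} [Fintype B] [Fintype S] [Nonempty B] [Nonempty S]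
    [DecidableEq B] [DecidableEq S]
    (c : B → ℝ) (hc : ∀ b, 0 ≤ c b)
    (v : B → S → ℝ) (hv : ∀ b s, 0 ≤ v b s)
    -- a run of Algorithm 3: the chosen box `bx R` and covered set `A R` at each state,
    -- and the depth `d s` at which each scenario `s` is covered
    (bx : Finset S → B) (A : Finset S → Finset S) (d : S → ℕ)
    (hAsub : ∀ s : S, ∀ k ≤ d s, A (fullPath v bx A s k) ⊆ fullPath v bx A s k)
    (hAne : ∀ s : S, ∀ k ≤ d s, (A (fullPath v bx A s k)).Nonempty)
    -- `(bx R, A R)` minimizes the ratio over all boxes and nonempty subsets of `R`: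
    (hmin : ∀ s : S, ∀ k ≤ d s, ∀ b' : B, ∀ A' : Finset S,
      A' ⊆ fullPath v bx A s k → A'.Nonempty →
      (fullCostAt c v bx A s k (bx (fullPath v bx A s k)) * (fullPath v bx A s k).card +
          ∑ x ∈ A (fullPath v bx A s k), v (bx (fullPath v bx A s k)) x) /
        (A (fullPath v bx A s k)).card ≤
      (fullCostAt c v bx A s k b' * (fullPath v bx A s k).card + ∑ x ∈ A', v b' x) /
        A'.card)
    -- scenario `s` survives until depth `d s`, where it is covered:
    (hnotcov : ∀ s : S, ∀ k < d s, s ∉ A (fullPath v bx A s k))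
    (hcov : ∀ s : S, s ∈ A (fullPath v bx A s (d s)))
    -- any partially-adaptive solution:
    (π : Fin (Fintype.card B) ≃ B) (τ : S → Fin (Fintype.card B)) :
    ∑ s, ((∑ k ∈ Finset.range (d s + 1),
          fullCostAt c v bx A s k (bx (fullPath v bx A s k))) +
        v (bx (fullPath v bx A s (d s))) s) ≤
      (3 + 2 * Real.sqrt 2) * ∑ s, (optOpenCost c π τ s + optValue v π τ s) := by
  classical
  have hsq : Real.sqrt 2 * Real.sqrt 2 = 2 := Real.mul_self_sqrt (by norm_num)
  have hsq0 : 0 ≤ Real.sqrt 2 := Real.sqrt_nonneg 2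
  have hsqlb : 1.4 ≤ Real.sqrt 2 := by nlinarith
  have hsqub : Real.sqrt 2 ≤ 1.5 := by nlinarith
  set γ : ℝ := 2 - Real.sqrt 2 with hγdef
  set β : ℝ := 2 * Real.sqrt 2 - 2 with hβdef
  set δ : ℝ := Real.sqrt 2 - 1 with hδdef
  have hγ0 : 0 < γ := by rw [hγdef]; nlinarith
  have hγ1 : γ ≤ 1 := by rw [hγdef]; nlinarith
  have hβ0 : 0 < β := by rw [hβdef]; nlinarith
  have hβ1 : β ≤ 1 := by rw [hβdef]; nlinarith
  have hδ0 : 0 < δ := by rw [hδdef]; nlinarith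
  have hδ2 : δ ≤ γ + β - 1 := by rw [hδdef, hγdef, hβdef]; nlinarith
  set copt := optOpenCost c π τ with hcoptdef
  set vopt := optValue v π τ with hvoptdef
  have hcopt0 : ∀ s, 0 ≤ copt s := fun s => Finset.sum_nonneg (fun i _ => hc (π i))
  have hvopt0 : ∀ s, 0 ≤ vopt s := by
    intro s
    obtain ⟨i, hi, hieq⟩ := Finset.exists_mem_eq_inf' (Finset.nonempty_Iic)
      (fun i => v (π i) s)
    rw [hvoptdef, optValue, hieq]
    exact hv _ _
  set yfun : S → ℝ := fun s => quantQ copt (fullPath v bx A s (d s))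
      ⌈γ * ((fullPath v bx A s (d s)).card : ℝ)⌉₊ with hyfun
  set zfun : S → ℝ := fun s => quantQ vopt (fullPath v bx A s (d s))
      ⌈β * ((fullPath v bx A s (d s)).card : ℝ)⌉₊ with hzfun
  -- accounting: rewrite the algorithm's cost as a sum over covering states
  have hacc_c : ∑ s, ∑ k ∈ Finset.range (d s + 1),
      fullCostAt c v bx A s k (bx (fullPath v bx A s k)) =
      ∑ s', fullCostAt c v bx A s' (d s') (bx (fullPath v bx A s' (d s'))) *
        ((fullPath v bx A s' (d s')).card : ℝ) /
        ((A (fullPath v bx A s' (d s'))).card : ℝ) := by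
    exact accounting_c v bx A d hnotcov hcov hAsub hAne
      (fun s k => fullCostAt c v bx A s k (bx (fullPath v bx A s k)))
      (fun s s' k hmem => by
        show fullCostAt c v bx A s k (bx (fullPath v bx A s k)) =
          fullCostAt c v bx A s' k (bx (fullPath v bx A s' k))
        rw [fullCostAt_eq_of_mem c v bx A s s' k hmem k le_rfl,
          fullPath_eq_of_mem v bx A s s' k hmem k le_rfl])
  have hacc_v : ∑ s, v (bx (fullPath v bx A s (d s))) s =
      ∑ s', (∑ x ∈ A (fullPath v bx A s' (d s')), v (bx (fullPath v bx A s' (d s'))) x) /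
        ((A (fullPath v bx A s' (d s'))).card : ℝ) := by
    rw [accounting_v v bx A d hnotcov hcov hAsub hAne
      (fun s => v (bx (fullPath v bx A s (d s))) s)]
    refine Finset.sum_congr rfl (fun s' _ => ?_)
    congr 1
    refine Finset.sum_congr rfl (fun x hx => ?_)
    obtain ⟨hdx, hEq⟩ := cov_here v bx A d hnotcov hcov hAsub s' x le_rfl hx
    show v (bx (fullPath v bx A x (d x))) x = v (bx (fullPath v bx A s' (d s'))) x
    rw [← hEq]
  have hALG : ∑ s, ((∑ k ∈ Finset.range (d s + 1),
        fullCostAt c v bx A s k (bx (fullPath v bx A s k))) +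
        v (bx (fullPath v bx A s (d s))) s) =
      ∑ s', (fullCostAt c v bx A s' (d s') (bx (fullPath v bx A s' (d s'))) *
          ((fullPath v bx A s' (d s')).card : ℝ) +
          ∑ x ∈ A (fullPath v bx A s' (d s')), v (bx (fullPath v bx A s' (d s'))) x) /
        ((A (fullPath v bx A s' (d s'))).card : ℝ) := by
    rw [Finset.sum_add_distrib, hacc_c, hacc_v, ← Finset.sum_add_distrib]
    exact Finset.sum_congr rfl (fun s' _ => by rw [add_div])
  -- per-scenario bound
  have hper : ∀ s' : S,
      (fullCostAt c v bx A s' (d s') (bx (fullPath v bx A s' (d s'))) *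
          ((fullPath v bx A s' (d s')).card : ℝ) +
          ∑ x ∈ A (fullPath v bx A s' (d s')), v (bx (fullPath v bx A s' (d s'))) x) /
        ((A (fullPath v bx A s' (d s'))).card : ℝ) ≤ yfun s' / δ + zfun s' := by
    intro s'
    exact perScenario c hc v hv bx A d hmin hnotcov π τ γ β δ hγ0 hγ1 hβ0 hβ1 hδ0 hδ2 s'
  -- layer-cake comparisons
  have hy0 : ∀ s, 0 ≤ yfun s := by
    intro s
    have hne : (fullPath v bx A s (d s)).Nonempty :=
      ⟨s, mem_fullPath_self v bx A d hnotcov s le_rfl⟩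
    have hc1 : 1 ≤ (fullPath v bx A s (d s)).card := Finset.card_pos.2 hne
    have hmle : ⌈γ * ((fullPath v bx A s (d s)).card : ℝ)⌉₊ ≤ (fullPath v bx A s (d s)).card := by
      refine Nat.ceil_le.2 ?_
      have : (0:ℝ) ≤ ((fullPath v bx A s (d s)).card : ℝ) := Nat.cast_nonneg _
      nlinarith
    obtain ⟨x, -, hx⟩ := Finset.mem_image.1 (quantQ_spec copt _ _ hne hmle).1
    rw [hyfun]
    simp only
    rw [← hx]
    exact hcopt0 x
  have hz0 : ∀ s, 0 ≤ zfun s := by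
    intro s
    have hne : (fullPath v bx A s (d s)).Nonempty :=
      ⟨s, mem_fullPath_self v bx A d hnotcov s le_rfl⟩
    have hc1 : 1 ≤ (fullPath v bx A s (d s)).card := Finset.card_pos.2 hne
    have hmle : ⌈β * ((fullPath v bx A s (d s)).card : ℝ)⌉₊ ≤ (fullPath v bx A s (d s)).card := by
      refine Nat.ceil_le.2 ?_
      have : (0:ℝ) ≤ ((fullPath v bx A s (d s)).card : ℝ) := Nat.cast_nonneg _
      nlinarith
    obtain ⟨x, -, hx⟩ := Finset.mem_image.1 (quantQ_spec vopt _ _ hne hmle).1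
    rw [hzfun]
    simp only
    rw [← hx]
    exact hvopt0 x
  have hquantbound : ∀ (ρ : ℝ), 0 < ρ → ρ ≤ 1 → ∀ n : ℕ, 1 ≤ n →
      (1 - ρ) * (n:ℝ) ≤ (n:ℝ) + 1 - (⌈ρ * (n:ℝ)⌉₊ : ℝ) := by
    intro ρ hρ0 hρ1 n hn
    have h1 : (⌈ρ * (n:ℝ)⌉₊ : ℝ) < ρ * n + 1 :=
      Nat.ceil_lt_add_one (by positivity)
    nlinarith
  have hmfun1 : ∀ (ρ : ℝ), 0 < ρ → ∀ n : ℕ, 1 ≤ n → 1 ≤ ⌈ρ * (n:ℝ)⌉₊ := by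
    intro ρ hρ0 n hn
    refine Nat.one_le_iff_ne_zero.2 ?_
    simp only [ne_eq, Nat.ceil_eq_zero, not_le]
    have : (1:ℝ) ≤ (n:ℝ) := by exact_mod_cast hn
    nlinarith
  have hmfunn : ∀ (ρ : ℝ), ρ ≤ 1 → ∀ n : ℕ, 1 ≤ n → ⌈ρ * (n:ℝ)⌉₊ ≤ n := by
    intro ρ hρ1 n hn
    refine Nat.ceil_le.2 ?_
    have : (0:ℝ) ≤ (n:ℝ) := Nat.cast_nonneg _
    nlinarith
  have hlayer_y : ∑ s, yfun s ≤ (1/(1-γ)) * ∑ s, copt s := by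
    refine layer_cake yfun copt hy0 hcopt0 (1/(1-γ)) (le_of_lt (one_div_pos.mpr (by rw [hγdef]; nlinarith))) ?_
    intro t ht
    exact heavy_count v bx A d hnotcov copt (fun n => ⌈γ * (n:ℝ)⌉₊) (1-γ)
      (by nlinarith) (fun n hn => hmfun1 γ hγ0 n hn) (fun n hn => hmfunn γ hγ1 n hn)
      (fun n hn => hquantbound γ hγ0 hγ1 n hn) t
  have hlayer_z : ∑ s, zfun s ≤ (1/(1-β)) * ∑ s, vopt s := by
    refine layer_cake zfun vopt hz0 hvopt0 (1/(1-β)) (le_of_lt (one_div_pos.mpr (by rw [hβdef]; nlinarith))) ?_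
    intro t ht
    exact heavy_count v bx A d hnotcov vopt (fun n => ⌈β * (n:ℝ)⌉₊) (1-β)
      (by nlinarith) (fun n hn => hmfun1 β hβ0 n hn) (fun n hn => hmfunn β hβ1 n hn)
      (fun n hn => hquantbound β hβ0 hβ1 n hn) t
  -- combine
  rw [hALG]
  have hsum1 : ∑ s', (fullCostAt c v bx A s' (d s') (bx (fullPath v bx A s' (d s'))) *
          ((fullPath v bx A s' (d s')).card : ℝ) +
          ∑ x ∈ A (fullPath v bx A s' (d s')), v (bx (fullPath v bx A s' (d s'))) x) /
        ((A (fullPath v bx A s' (d s'))).card : ℝ) ≤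
      (∑ s, yfun s) / δ + ∑ s, zfun s := by
    calc _ ≤ ∑ s', (yfun s' / δ + zfun s') := Finset.sum_le_sum (fun s' _ => hper s')
      _ = (∑ s, yfun s) / δ + ∑ s, zfun s := by
        rw [Finset.sum_add_distrib, Finset.sum_div]
  refine le_trans hsum1 ?_
  have hSc : 0 ≤ ∑ s, copt s := Finset.sum_nonneg (fun s _ => hcopt0 s)
  have hSv : 0 ≤ ∑ s, vopt s := Finset.sum_nonneg (fun s _ => hvopt0 s)
  have hyδ : (∑ s, yfun s) / δ ≤ (1/δ) * ((1/(1-γ)) * ∑ s, copt s) := by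
    rw [div_eq_mul_inv, mul_comm]
    have h1δ : 0 ≤ (1/δ) := by positivity
    calc δ⁻¹ * ∑ s, yfun s = (1/δ) * ∑ s, yfun s := by rw [one_div]
      _ ≤ (1/δ) * ((1/(1-γ)) * ∑ s, copt s) := mul_le_mul_of_nonneg_left hlayer_y h1δ
  have hcoef1 : (1/δ) * (1/(1-γ)) = 3 + 2 * Real.sqrt 2 := by
    rw [hδdef, hγdef]
    rw [div_mul_div_comm, one_mul, eq_comm, eq_div_iff (by nlinarith)]
    nlinarith
  have hcoef2 : (1/(1-β)) = 3 + 2 * Real.sqrt 2 := by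
    rw [hβdef, eq_comm, eq_div_iff (by nlinarith)]
    nlinarith
  calc (∑ s, yfun s) / δ + ∑ s, zfun s
      ≤ (1/δ) * ((1/(1-γ)) * ∑ s, copt s) + (1/(1-β)) * ∑ s, vopt s :=
        add_le_add hyδ hlayer_z
    _ = (3 + 2 * Real.sqrt 2) * ∑ s, copt s + (3 + 2 * Real.sqrt 2) * ∑ s, vopt s := by
        rw [← mul_assoc, hcoef1, hcoef2]
    _ = (3 + 2 * Real.sqrt 2) * ∑ s, (optOpenCost c π τ s + optValue v π τ s) := by
        rw [Finset.sum_add_distrib, mul_add]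
end

section
/- Let T be a finite rooted tree with a finite nonempty multiset of nonnegative real weights at each node, and let ρ ∈ (0,1]. Then ρ · cost(T^{(ρ)}) ≤ cost(T), where T^{(ρ)} is the tree obtained by replacing, at every node u, each of the |w_u| weights by the top ρ-percentile q^ρ(T_u) of all weights in the subtree rooted at u. -/
/-- A finite rooted tree carrying a multiset of real weights at each node. -/
inductive WTree : Type
  | node (w : Multiset ℝ) (children : List WTree)

namespace WTree

/-- The multiset of all weights appearing in the tree. -/
def weights : WTree → Multiset ℝ
  | node w cs => w + (cs.attach.map (fun c => weights c.1)).sum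
decreasing_by
  simp only [node.sizeOf_spec]
  have := List.sizeOf_lt_of_mem c.2
  omega

/-- Every node carries a nonempty multiset of nonnegative weights. -/
def Valid : WTree → Prop
  | node w cs => w ≠ 0 ∧ (∀ x ∈ w, (0:ℝ) ≤ x) ∧ ∀ c ∈ cs.attach, Valid c.1
decreasing_by
  simp only [node.sizeOf_spec]
  have := List.sizeOf_lt_of_mem c.2
  omega

/-- The `k`-th largest element of a multiset of reals (1-indexed). -/
noncomputable def kthLargest (m : Multiset ℝ) (k : ℕ) : ℝ :=
  (m.sort (· ≤ ·)).getD (Multiset.card m - k) 0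

/-- The cost of the rescaled tree `T^{(ρ)}`: at every node `u`, each of the `|w_u|`
weights is replaced by the top `ρ`-percentile `q^ρ(T_u)` (the `⌈ρ·N_u⌉`-th largest
weight in the subtree rooted at `u`). -/
noncomputable def scaledCost (ρ : ℝ) : WTree → ℝ
  | node w cs =>
      (Multiset.card w : ℝ) *
          kthLargest (weights (node w cs))
            ⌈ρ * (Multiset.card (weights (node w cs)) : ℝ)⌉₊ +
        (cs.attach.map (fun c => scaledCost ρ c.1)).sum
decreasing_by
  simp only [node.sizeOf_spec]
  have := List.sizeOf_lt_of_mem c.2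
  omega

end WTree


namespace WTree

/-! ### Auxiliary list-sum lemmas -/

lemma listSum_map_sum (f : ℝ → ℝ) :
    ∀ (l : List (Multiset ℝ)), (l.sum.map f).sum = (l.map (fun m => (m.map f).sum)).sum
  | [] => by simp
  | a :: t => by simp [Multiset.map_add, listSum_map_sum f t]

lemma card_listSum :
    ∀ (l : List (Multiset ℝ)), Multiset.card l.sum = (l.map Multiset.card).sum
  | [] => by simp
  | a :: t => by simp [card_listSum t]

lemma mem_listSum {x : ℝ} :
    ∀ {l : List (Multiset ℝ)}, x ∈ l.sum → ∃ m ∈ l, x ∈ m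
  | [], h => by simp at h
  | a :: t, h => by
    rw [List.sum_cons, Multiset.mem_add] at h
    rcases h with h | h
    · exact ⟨a, by simp, h⟩
    · obtain ⟨m, hm, hx⟩ := mem_listSum h
      exact ⟨m, by simp [hm], hx⟩

lemma cast_listSum {α : Type*} (f : α → ℕ) :
    ∀ (l : List α), (((l.map f).sum : ℕ) : ℝ) = (l.map (fun c => ((f c : ℕ) : ℝ))).sum
  | [] => by simp
  | a :: t => by push_cast [List.map_cons, List.sum_cons, cast_listSum f t]; ring

lemma list_sum_map_add {α : Type*} (f g : α → ℝ) :
    ∀ (l : List α), (l.map (fun c => f c + g c)).sum = (l.map f).sum + (l.map g).sum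
  | [] => by simp
  | a :: t => by simp [list_sum_map_add f g t]; ring

/-! ### Expanding `weights` at a node -/

lemma weights_node (w : Multiset ℝ) (cs : List WTree) :
    weights (node w cs) = w + (cs.attach.map (fun c => weights c.1)).sum := by
  rw [weights]

lemma map_weights_node_sum (f : ℝ → ℝ) (w : Multiset ℝ) (cs : List WTree) :
    ((weights (node w cs)).map f).sum
      = (w.map f).sum + (cs.attach.map (fun c => ((weights c.1).map f).sum)).sum := by
  rw [weights_node, Multiset.map_add, Multiset.sum_add, listSum_map_sum, List.map_map]
  rfl

lemma card_weights_node (w : Multiset ℝ) (cs : List WTree) :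
    Multiset.card (weights (node w cs))
      = Multiset.card w + (cs.attach.map (fun c => Multiset.card (weights c.1))).sum := by
  rw [weights_node, Multiset.card_add, card_listSum, List.map_map]
  rfl

/-! ### Facts about `kthLargest` -/

/-- At least `k` of the weights are `≥` the `k`-th largest. -/
lemma kthLargest_count (m : Multiset ℝ) (k : ℕ) (hk : k ≤ Multiset.card m) :
    k ≤ Multiset.card (m.filter (fun x => kthLargest m k ≤ x)) := by
  rcases Nat.eq_zero_or_pos k with rfl | hkpos
  · exact Nat.zero_le _
  · set q := kthLargest m k with hq
    set l := m.sort (· ≤ ·) with hl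
    have hlen : l.length = Multiset.card m := Multiset.length_sort _
    have hsort : l.Pairwise (· ≤ ·) := Multiset.pairwise_sort _ _
    have hidx : l.length - k < l.length := by omega
    have hq' : q = l[l.length - k] := by
      rw [hq, kthLargest, ← hl, ← hlen, List.getD_eq_getElem l 0 hidx]
    have hall : ∀ x ∈ l.drop (l.length - k), q ≤ x := by
      intro x hx
      obtain ⟨i, hi, rfl⟩ := List.mem_iff_getElem.1 hx
      rw [List.getElem_drop, hq']
      have h1 : l.length - k + i < l.length := by
        have h2 := hi
        rw [List.length_drop] at h2
        omega
      have h3 := hsort.rel_get_of_le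
        (a := ⟨l.length - k, hidx⟩) (b := ⟨l.length - k + i, h1⟩)
        (Fin.mk_le_mk.2 (Nat.le_add_right _ _))
      simpa [List.get_eq_getElem] using h3
    have h2 : (l.drop (l.length - k)).countP (fun x => decide (q ≤ x))
        = (l.drop (l.length - k)).length :=
      List.countP_eq_length.2 (fun x hx => decide_eq_true (hall x hx))
    have h3 := List.Sublist.countP_le (p := fun x => decide (q ≤ x))
      (List.drop_sublist (l.length - k) l)
    have h4 : (l.drop (l.length - k)).length = k := by
      rw [List.length_drop]; omega
    have h5 : Multiset.card (m.filter (fun x => q ≤ x))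
        = l.countP (fun x => decide (q ≤ x)) := by
      rw [← Multiset.countP_eq_card_filter]
      conv_lhs => rw [← Multiset.sort_eq m (· ≤ ·), ← hl]
      exact Multiset.coe_countP _ l
    omega

/-- Key splitting inequality at the percentile `q`. -/
lemma key_split (m : Multiset ℝ) (k : ℕ) (hk : k ≤ Multiset.card m) {s : ℝ}
    (hs : s ≤ kthLargest m k) :
    (k : ℝ) * (kthLargest m k - s) + (m.map (fun x => max (x - kthLargest m k) 0)).sum
      ≤ (m.map (fun x => max (x - s) 0)).sum := by
  set q := kthLargest m k with hq
  set F := m.filter (fun x => q ≤ x) with hF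
  set G := m.filter (fun x => ¬ q ≤ x) with hG
  have hFG : F + G = m := Multiset.filter_add_not _ m
  have hsplit : ∀ f : ℝ → ℝ, (m.map f).sum = (F.map f).sum + (G.map f).sum := by
    intro f; rw [← hFG, Multiset.map_add, Multiset.sum_add]
  have hFsum : (F.map (fun x => max (x - s) 0)).sum
      = (Multiset.card F : ℝ) * (q - s) + (F.map (fun x => max (x - q) 0)).sum := by
    have hcong : F.map (fun x => max (x - s) 0)
        = F.map (fun x => (q - s) + max (x - q) 0) := by
      apply Multiset.map_congr rfl
      intro x hx
      have hqx : q ≤ x := Multiset.of_mem_filter hx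
      rw [max_eq_left (by linarith), max_eq_left (by linarith)]
      ring
    rw [hcong, Multiset.sum_map_add, Multiset.map_const', Multiset.sum_replicate,
      nsmul_eq_mul]
  have hGsum : (G.map (fun x => max (x - q) 0)).sum
      ≤ (G.map (fun x => max (x - s) 0)).sum := by
    apply Multiset.sum_map_le_sum_map
    intro x _
    exact max_le_max (by linarith) le_rfl
  have hcount : (k : ℝ) ≤ (Multiset.card F : ℝ) := by
    exact_mod_cast kthLargest_count m k hk
  have hkq : (k : ℝ) * (q - s) ≤ (Multiset.card F : ℝ) * (q - s) :=
    mul_le_mul_of_nonneg_right hcount (by linarith)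
  calc (k : ℝ) * (q - s) + (m.map (fun x => max (x - q) 0)).sum
      = (k : ℝ) * (q - s) + ((F.map (fun x => max (x - q) 0)).sum
          + (G.map (fun x => max (x - q) 0)).sum) := by rw [← hsplit]
    _ ≤ (Multiset.card F : ℝ) * (q - s) + ((F.map (fun x => max (x - q) 0)).sum
          + (G.map (fun x => max (x - s) 0)).sum) := by linarith
    _ = (F.map (fun x => max (x - s) 0)).sum + (G.map (fun x => max (x - s) 0)).sum := by
        rw [hFsum]; ring
    _ = (m.map (fun x => max (x - s) 0)).sum := (hsplit _).symm

/-! ### The slack function -/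

/-- `scaledSlack ρ s T = Σ_u |w_u| · max(q_u − s, 0)`. -/
noncomputable def scaledSlack (ρ s : ℝ) : WTree → ℝ
  | node w cs =>
      (Multiset.card w : ℝ) *
          max (kthLargest (weights (node w cs))
            ⌈ρ * (Multiset.card (weights (node w cs)) : ℝ)⌉₊ - s) 0 +
        (cs.attach.map (fun c => scaledSlack ρ s c.1)).sum
decreasing_by
  simp only [node.sizeOf_spec]
  have := List.sizeOf_lt_of_mem c.2
  omega

lemma scaledSlack_node (ρ s : ℝ) (w : Multiset ℝ) (cs : List WTree) :
    scaledSlack ρ s (node w cs) =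
      (Multiset.card w : ℝ) *
          max (kthLargest (weights (node w cs))
            ⌈ρ * (Multiset.card (weights (node w cs)) : ℝ)⌉₊ - s) 0 +
        (cs.attach.map (fun c => scaledSlack ρ s c.1)).sum := by
  rw [scaledSlack]

/-- Shifting the level down from `t` to `s` increases the slack by at most `N·(t−s)`. -/
lemma scaledSlack_shift (ρ : ℝ) (s t : ℝ) (hst : s ≤ t) :
    ∀ T : WTree, scaledSlack ρ s T
      ≤ scaledSlack ρ t T + (Multiset.card (weights T) : ℝ) * (t - s)
  | node w cs => by
    rw [scaledSlack_node, scaledSlack_node]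
    set q := kthLargest (weights (node w cs))
      ⌈ρ * (Multiset.card (weights (node w cs)) : ℝ)⌉₊ with hqdef
    have hmax : max (q - s) 0 ≤ max (q - t) 0 + (t - s) := by
      apply max_le
      · have := le_max_left (q - t) 0; linarith
      · have := le_max_right (q - t) 0; linarith
    have hchild : (cs.attach.map (fun c => scaledSlack ρ s c.1)).sum
        ≤ (cs.attach.map (fun c => scaledSlack ρ t c.1)).sum
          + (cs.attach.map (fun c =>
              (Multiset.card (weights c.1) : ℝ) * (t - s))).sum := by
      rw [← list_sum_map_add]
      apply List.sum_le_sum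
      intro c _
      exact scaledSlack_shift ρ s t hst c.1
    have hNsum : (cs.attach.map (fun c => (Multiset.card (weights c.1) : ℝ) * (t - s))).sum
        = (cs.attach.map (fun c => (Multiset.card (weights c.1) : ℝ))).sum * (t - s) :=
      List.sum_map_mul_right _ _ _
    have hcard : (Multiset.card (weights (node w cs)) : ℝ)
        = (Multiset.card w : ℝ)
          + (cs.attach.map (fun c => (Multiset.card (weights c.1) : ℝ))).sum := by
      rw [card_weights_node]
      push_cast [cast_listSum (fun c : {x // x ∈ cs} => Multiset.card (weights c.1)) cs.attach]
      ring
    have hw : (Multiset.card w : ℝ) * max (q - s) 0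
        ≤ (Multiset.card w : ℝ) * (max (q - t) 0 + (t - s)) :=
      mul_le_mul_of_nonneg_left hmax (Nat.cast_nonneg _)
    rw [hNsum] at hchild
    rw [hcard]
    nlinarith [hchild, hw]
termination_by T => sizeOf T
decreasing_by
  simp only [node.sizeOf_spec]
  have := List.sizeOf_lt_of_mem c.2
  omega

/-- Main estimate: `ρ · scaledSlack ρ s T ≤ Σ_{x ∈ T} max(x − s, 0)`. -/
lemma mul_scaledSlack_le (ρ : ℝ) (hρ0 : 0 ≤ ρ) (hρ1 : ρ ≤ 1) :
    ∀ (T : WTree) (s : ℝ),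
      ρ * scaledSlack ρ s T ≤ ((weights T).map (fun x => max (x - s) 0)).sum
  | node w cs, s => by
    rw [scaledSlack_node]
    set m := weights (node w cs) with hm
    set N := Multiset.card m with hN
    set k := ⌈ρ * (N : ℝ)⌉₊ with hk
    set q := kthLargest m k with hq
    have hNw : Multiset.card w ≤ N := by
      rw [hN, hm, card_weights_node]; omega
    have hkN : k ≤ N := Nat.ceil_le.2 (by nlinarith [Nat.cast_nonneg (α := ℝ) N])
    have hρN : ρ * (N : ℝ) ≤ (k : ℝ) := Nat.le_ceil _
    have hmsum : ∀ f : ℝ → ℝ, (m.map f).sum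
        = (w.map f).sum + (cs.attach.map (fun c => ((weights c.1).map f).sum)).sum := by
      intro f; rw [hm]; exact map_weights_node_sum f w cs
    have hcard : (N : ℝ) = (Multiset.card w : ℝ)
        + (cs.attach.map (fun c => (Multiset.card (weights c.1) : ℝ))).sum := by
      rw [hN, hm, card_weights_node]
      push_cast [cast_listSum (fun c : {x // x ∈ cs} => Multiset.card (weights c.1)) cs.attach]
      ring
    rcases le_or_gt q s with hqs | hsq
    · -- Case q ≤ s : the root term vanishes.
      have h0 : max (q - s) 0 = 0 := max_eq_right (by linarith)
      have hchild : ρ * (cs.attach.map (fun c => scaledSlack ρ s c.1)).sum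
          ≤ (cs.attach.map (fun c =>
              ((weights c.1).map (fun x => max (x - s) 0)).sum)).sum := by
        rw [← List.sum_map_mul_left]
        apply List.sum_le_sum
        intro c _
        exact mul_scaledSlack_le ρ hρ0 hρ1 c.1 s
      have hwpos : 0 ≤ (w.map (fun x => max (x - s) 0)).sum :=
        Multiset.sum_nonneg (by
          intro x hx
          obtain ⟨y, _, rfl⟩ := Multiset.mem_map.1 hx
          exact le_max_right _ _)
      rw [hmsum, h0]
      linarith
    · -- Case s < q.
      have hd : (0 : ℝ) ≤ q - s := by linarith
      have hmax : max (q - s) 0 = q - s := max_eq_left hd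
      have hchild : ρ * (cs.attach.map (fun c => scaledSlack ρ s c.1)).sum
          ≤ (cs.attach.map (fun c =>
                ((weights c.1).map (fun x => max (x - q) 0)).sum)).sum
            + ρ * (cs.attach.map (fun c => (Multiset.card (weights c.1) : ℝ))).sum
              * (q - s) := by
        rw [← List.sum_map_mul_left]
        have hle := List.sum_le_sum (l := cs.attach)
          (f := fun c => ρ * scaledSlack ρ s c.1)
          (g := fun c => ((weights c.1).map (fun x => max (x - q) 0)).sum
            + ρ * (Multiset.card (weights c.1) : ℝ) * (q - s))
          (by
            intro c _
            have h1 := scaledSlack_shift ρ s q (le_of_lt hsq) c.1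
            have h2 := mul_scaledSlack_le ρ hρ0 hρ1 c.1 q
            show ρ * scaledSlack ρ s c.1
              ≤ ((weights c.1).map (fun x => max (x - q) 0)).sum
                + ρ * (Multiset.card (weights c.1) : ℝ) * (q - s)
            nlinarith [mul_le_mul_of_nonneg_left h1 hρ0])
        rw [list_sum_map_add] at hle
        have h3 : (cs.attach.map (fun c =>
              ρ * (Multiset.card (weights c.1) : ℝ) * (q - s))).sum
            = ρ * (cs.attach.map (fun c => (Multiset.card (weights c.1) : ℝ))).sum
              * (q - s) := by
          rw [show (fun c : {x // x ∈ cs} =>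
                ρ * (Multiset.card (weights c.1) : ℝ) * (q - s))
              = (fun c : {x // x ∈ cs} =>
                (ρ * (q - s)) * (Multiset.card (weights c.1) : ℝ)) from by
            funext c; ring]
          rw [List.sum_map_mul_left]
          ring
        rw [h3] at hle
        exact hle
      have hkey := key_split m k hkN (le_of_lt hsq)
      rw [← hq] at hkey
      have hwq : 0 ≤ (w.map (fun x => max (x - q) 0)).sum :=
        Multiset.sum_nonneg (by
          intro x hx
          obtain ⟨y, _, rfl⟩ := Multiset.mem_map.1 hx
          exact le_max_right _ _)
      have hmq := hmsum (fun x => max (x - q) 0)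
      have hms := hmsum (fun x => max (x - s) 0)
      have hNd : ρ * (N : ℝ) * (q - s)
          = ρ * (Multiset.card w : ℝ) * (q - s)
            + ρ * (cs.attach.map (fun c => (Multiset.card (weights c.1) : ℝ))).sum
              * (q - s) := by
        rw [hcard]; ring
      have hkd : ρ * (N : ℝ) * (q - s) ≤ (k : ℝ) * (q - s) :=
        mul_le_mul_of_nonneg_right hρN hd
      rw [hmax]
      nlinarith [hchild, hkey, hNd, hkd, hwq, hmq, hms]
termination_by T s => sizeOf T
decreasing_by
  all_goals
    simp only [node.sizeOf_spec]
    have := List.sizeOf_lt_of_mem c.2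
    omega

lemma scaledCost_le_slack (ρ : ℝ) :
    ∀ T : WTree, scaledCost ρ T ≤ scaledSlack ρ 0 T
  | node w cs => by
    rw [scaledCost, scaledSlack_node]
    apply add_le_add
    · apply mul_le_mul_of_nonneg_left _ (Nat.cast_nonneg _)
      rw [sub_zero]
      exact le_max_left _ _
    · apply List.sum_le_sum
      intro c _
      exact scaledCost_le_slack ρ c.1
termination_by T => sizeOf T
decreasing_by
  simp only [node.sizeOf_spec]
  have := List.sizeOf_lt_of_mem c.2
  omega

lemma weights_nonneg : ∀ (T : WTree), T.Valid → ∀ x ∈ weights T, 0 ≤ x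
  | node w cs => by
    intro hv x hx
    rw [Valid] at hv
    rw [weights_node] at hx
    rcases Multiset.mem_add.1 hx with h | h
    · exact hv.2.1 x h
    · obtain ⟨mm, hmm, hxm⟩ := mem_listSum h
      obtain ⟨c, hc, rfl⟩ := List.mem_map.1 hmm
      exact weights_nonneg c.1 (hv.2.2 c hc) x hxm
termination_by T => sizeOf T
decreasing_by
  simp only [node.sizeOf_spec]
  have := List.sizeOf_lt_of_mem c.2
  omega

end WTree

/-- Lemma 3.1 (tree-histogram scaling): for every finite weighted tree `T` with a
nonempty multiset of nonnegative weights at each node and every `ρ ∈ (0,1]`,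
`ρ · cost(T^{(ρ)}) ≤ cost(T)`. -/
theorem scaledCost_le_cost (ρ : ℝ) (hρ0 : 0 < ρ) (hρ1 : ρ ≤ 1)
    (T : WTree) (hT : T.Valid) :
    ρ * WTree.scaledCost ρ T ≤ (WTree.weights T).sum := by
  have h1 := WTree.scaledCost_le_slack ρ T
  have h2 := WTree.mul_scaledSlack_le ρ (le_of_lt hρ0) hρ1 T 0
  have h3 : ((WTree.weights T).map (fun x => max (x - 0) 0)).sum ≤ (WTree.weights T).sum := by
    have h4 := Multiset.sum_map_le_sum_map (s := WTree.weights T)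
      (fun x => max (x - 0) 0) id (by
        intro x hx
        simp only [id_eq, sub_zero]
        exact max_le le_rfl (WTree.weights_nonneg T hT x hx))
    simpa using h4
  have h5 : ρ * WTree.scaledCost ρ T ≤ ρ * WTree.scaledSlack ρ 0 T :=
    mul_le_mul_of_nonneg_left h1 (le_of_lt hρ0)
  linarith
end

section
/- Let v_1, …, v_m be nonnegative reals and c > 0. Then the unique real σ* satisfying (1/m)·Σ_{i=1}^m max(σ* − v_i, 0) = c equals the minimum over all nonempty subsets A ⊆ {1,…,m} of (c·m + Σ_{i∈A} v_i)/|A|. -/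
/-- Weitzman's reservation value: the unique `σ*` with
`(1/m)·∑ i, (σ* − v i)⁺ = c` equals the subset-ratio formula
`min_{∅ ≠ A ⊆ [m]} (c·m + ∑_{i∈A} v i)/|A|`. -/
theorem reservation_value_eq_min_subset_ratio (m : ℕ) (hm : 0 < m)
    (v : Fin m → ℝ) (hv : ∀ i, 0 ≤ v i) (c : ℝ) (hc : 0 < c)
    (σ : ℝ) (hσ : (1 / (m : ℝ)) * ∑ i, max (σ - v i) 0 = c) :
    σ = ((Finset.univ : Finset (Fin m)).powerset.filter (fun A => A.Nonempty)).inf'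
        ⟨Finset.univ, by
          simp only [Finset.mem_filter, Finset.mem_powerset, subset_refl, true_and]
          exact Finset.univ_nonempty_iff.mpr (Fin.pos_iff_nonempty.mp hm)⟩
        (fun A => (c * m + ∑ i ∈ A, v i) / A.card) := by
  have hm' : (0:ℝ) < m := by exact_mod_cast hm
  have hsum : ∑ i, max (σ - v i) 0 = c * m := by
    field_simp at hσ
    linarith [hσ]
  apply le_antisymm
  · apply Finset.le_inf'
    intro A hA
    simp only [Finset.mem_filter, Finset.mem_powerset] at hA
    have hAne := hA.2
    have hcard : (0:ℝ) < A.card := by exact_mod_cast Finset.card_pos.mpr hAne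
    rw [le_div_iff₀ hcard]
    have h1 : ∑ i ∈ A, (σ - v i) ≤ ∑ i ∈ A, max (σ - v i) 0 :=
      Finset.sum_le_sum (fun i _ => le_max_left _ _)
    have h2 : ∑ i ∈ A, max (σ - v i) 0 ≤ ∑ i, max (σ - v i) 0 :=
      Finset.sum_le_sum_of_subset_of_nonneg (Finset.subset_univ A)
        (fun i _ _ => le_max_right _ _)
    have h3 : ∑ i ∈ A, (σ - v i) = A.card * σ - ∑ i ∈ A, v i := by
      rw [Finset.sum_sub_distrib, Finset.sum_const, nsmul_eq_mul]
    linarith [h1, h2]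
  · set A : Finset (Fin m) := Finset.univ.filter (fun i => 0 < σ - v i) with hAdef
    have hAsum : ∑ i ∈ A, (σ - v i) = ∑ i, max (σ - v i) 0 := by
      rw [hAdef, Finset.sum_filter]
      refine Finset.sum_congr rfl (fun i _ => ?_)
      by_cases h : 0 < σ - v i
      · simp [h, max_eq_left h.le]
      · simp [h, max_eq_right (not_lt.mp h)]
    have hAne : A.Nonempty := by
      by_contra h
      rw [Finset.not_nonempty_iff_eq_empty] at h
      rw [h, Finset.sum_empty] at hAsum
      nlinarith
    have hAmem : A ∈ (Finset.univ : Finset (Fin m)).powerset.filter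
        (fun A => A.Nonempty) := by
      simp [Finset.mem_filter, hAne]
    have hcard : (0:ℝ) < A.card := by exact_mod_cast Finset.card_pos.mpr hAne
    have h3 : ∑ i ∈ A, (σ - v i) = A.card * σ - ∑ i ∈ A, v i := by
      rw [Finset.sum_sub_distrib, Finset.sum_const, nsmul_eq_mul]
    have hval : (c * m + ∑ i ∈ A, v i) / A.card = σ := by
      rw [div_eq_iff hcard.ne']
      rw [hsum] at hAsum
      linarith
    calc _ ≤ (c * m + ∑ i ∈ A, v i) / A.card := Finset.inf'_le _ hAmem
      _ = σ := hval
end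

section
/- Fix n boxes with unit opening costs, opened in a fixed order 1, …, n. For thresholds τ ∈ [0,∞)^n and a value vector v ∈ [0,∞)^n, let cost(τ, v) = (i*−1) + min_{j < i*} v_j, where i* is the least index i such that min_{j < i} v_j ≤ τ_i (so the policy stops before opening box i), and i* = n+1 if no such index exists (by convention min over the empty set is +∞, so the policy always opens box 1). Then for every ε > 0 and every v ∈ [0,∞)^n, the capped thresholds τ' defined by τ'_i = min(τ_i, n/ε) satisfy cost(τ', v) ≤ (1+ε) · cost(τ, v). -/
open scoped Classical

/-- Number of boxes opened by the threshold policy that opens boxes `1, …, n` in order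
and stops before opening box `i` as soon as the best value seen so far is at most `τ i`:
it opens `k` boxes for the least `k ∈ [1, n-1]` with `min_{j ≤ k} v j ≤ τ (k+1)`,
and opens all `n` boxes if no such `k` exists. -/
noncomputable def numOpened (n : ℕ) (τ v : ℕ → ℝ) : ℕ :=
  if h : ∃ k, (1 ≤ k ∧ k < n) ∧ ∃ j, 1 ≤ j ∧ j ≤ k ∧ v j ≤ τ (k + 1) then Nat.find h else n

theorem numOpened_pos (n : ℕ) (hn : 0 < n) (τ v : ℕ → ℝ) : 1 ≤ numOpened n τ v := by
  unfold numOpened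
  split
  · next h => exact (Nat.find_spec h).1.1
  · exact hn

/-- Total cost of the threshold policy with unit opening costs: the number of boxes
opened plus the best (minimum) value among the opened boxes. -/
noncomputable def thresholdCost (n : ℕ) (hn : 0 < n) (τ v : ℕ → ℝ) : ℝ :=
  (numOpened n τ v : ℝ) +
    (Finset.Icc 1 (numOpened n τ v)).inf'
      (Finset.nonempty_Icc.mpr (numOpened_pos n hn τ v)) v

theorem numOpened_le (n : ℕ) (τ v : ℕ → ℝ) : numOpened n τ v ≤ n := by
  unfold numOpened
  split
  · next h => exact le_of_lt (Nat.find_spec h).1.2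
  · exact le_rfl

theorem numOpened_mono (n : ℕ) (τ τ' v : ℕ → ℝ) (h : ∀ i, τ' i ≤ τ i) :
    numOpened n τ v ≤ numOpened n τ' v := by
  have himp : ∀ k, ((1 ≤ k ∧ k < n) ∧ ∃ j, 1 ≤ j ∧ j ≤ k ∧ v j ≤ τ' (k + 1)) →
      ((1 ≤ k ∧ k < n) ∧ ∃ j, 1 ≤ j ∧ j ≤ k ∧ v j ≤ τ (k + 1)) := by
    rintro k ⟨hr, j, h1, h2, h3⟩
    exact ⟨hr, j, h1, h2, h3.trans (h _)⟩
  unfold numOpened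
  split
  · next hP =>
    split
    · next hQ => exact Nat.find_mono himp
    · exact le_of_lt (Nat.find_spec hP).1.2
  · next hP =>
    split
    · next hQ => exact absurd ⟨Nat.find hQ, himp _ (Nat.find_spec hQ)⟩ hP
    · exact le_rfl

theorem not_pred_of_lt_numOpened (n : ℕ) (τ v : ℕ → ℝ) (k : ℕ)
    (hk : k < numOpened n τ v) :
    ¬((1 ≤ k ∧ k < n) ∧ ∃ j, 1 ≤ j ∧ j ≤ k ∧ v j ≤ τ (k + 1)) := by
  intro hc
  have hex : ∃ m, (1 ≤ m ∧ m < n) ∧ ∃ j, 1 ≤ j ∧ j ≤ m ∧ v j ≤ τ (m + 1) := ⟨k, hc⟩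
  have heq : numOpened n τ v = Nat.find hex := by unfold numOpened; rw [dif_pos hex]
  rw [heq] at hk
  exact Nat.find_min hex hk hc

/-- Capping the thresholds at `n/ε` increases the cost of a threshold policy by a factor
of at most `1 + ε` on every value vector. -/
theorem capped_thresholds_cost_le (n : ℕ) (hn : 0 < n) (τ v : ℕ → ℝ)
    (hτ : ∀ i, 0 ≤ τ i) (hv : ∀ i, 0 ≤ v i) (ε : ℝ) (hε : 0 < ε) :
    thresholdCost n hn (fun i => min (τ i) ((n : ℝ) / ε)) v ≤
      (1 + ε) * thresholdCost n hn τ v := by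
  have hle : ∀ i, min (τ i) ((n : ℝ) / ε) ≤ τ i := fun i => min_le_left _ _
  unfold thresholdCost
  set τ' : ℕ → ℝ := fun i => min (τ i) ((n : ℝ) / ε) with hτ'def
  set k := numOpened n τ v with hkdef
  set k' := numOpened n τ' v with hk'def
  have hkk' : k ≤ k' := numOpened_mono n τ τ' v hle
  have hk'n : k' ≤ n := numOpened_le n τ' v
  have hk1 : 1 ≤ k := numOpened_pos n hn τ v
  have hk'1 : 1 ≤ k' := numOpened_pos n hn τ' v
  set m := (Finset.Icc 1 k).inf' (Finset.nonempty_Icc.mpr hk1) v with hmdef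
  set m' := (Finset.Icc 1 k').inf' (Finset.nonempty_Icc.mpr hk'1) v with hm'def
  have hm0 : 0 ≤ m := Finset.le_inf' _ _ (fun j _ => hv j)
  have hm'm : m' ≤ m := Finset.inf'_mono v (Finset.Icc_subset_Icc_right hkk') _
  rcases hkk'.lt_or_eq with hlt | heq
  · -- k < k'
    have hkn : k < n := lt_of_lt_of_le hlt hk'n
    have hP : ∃ kk, (1 ≤ kk ∧ kk < n) ∧ ∃ j, 1 ≤ j ∧ j ≤ kk ∧ v j ≤ τ (kk + 1) := by
      by_contra hP
      have : k = n := by rw [hkdef]; unfold numOpened; rw [dif_neg hP]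
      omega
    have hkspec : (1 ≤ k ∧ k < n) ∧ ∃ j, 1 ≤ j ∧ j ≤ k ∧ v j ≤ τ (k + 1) := by
      have : k = Nat.find hP := by rw [hkdef]; unfold numOpened; rw [dif_pos hP]
      rw [this]; exact Nat.find_spec hP
    obtain ⟨-, j0, hj01, hj0k, hj0⟩ := hkspec
    have hfail := not_pred_of_lt_numOpened n τ' v k hlt
    push_neg at hfail
    have hall : ∀ j, 1 ≤ j → j ≤ k → τ' (k + 1) < v j := by
      intro j h1 h2
      exact lt_of_not_ge fun hc => (hfail ⟨hk1, hkn⟩ j h1 h2).not_ge hc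
    have hτ'eq : τ' (k + 1) = (n : ℝ) / ε := by
      have hlt' : τ' (k + 1) < τ (k + 1) := lt_of_lt_of_le (hall j0 hj01 hj0k) hj0
      have : (n : ℝ) / ε < τ (k + 1) := by
        rcases min_lt_iff.mp hlt' with h | h
        · exact absurd h (lt_irrefl _)
        · exact h
      simp [hτ'def, min_eq_right this.le]
    have hnm : (n : ℝ) / ε < m := by
      rw [Finset.lt_inf'_iff]
      intro j hj
      rw [Finset.mem_Icc] at hj
      have := hall j hj.1 hj.2
      rwa [hτ'eq] at this
    have hn' : (n : ℝ) < ε * m := by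
      rw [div_lt_iff₀ hε] at hnm
      linarith
    have hc1 : (k' : ℝ) ≤ n := Nat.cast_le.mpr hk'n
    have hc2 : (1 : ℝ) ≤ k := by exact_mod_cast hk1
    have hεk : 0 ≤ ε * k := mul_nonneg hε.le (by positivity)
    nlinarith [hm'm, hc1, hc2, hn', hεk, hm0]
  · -- k = k'
    have hmm' : m = m' := by
      rw [hmdef, hm'def]
      congr 1
      rw [heq]
    have hc2 : (1 : ℝ) ≤ k := by exact_mod_cast hk1
    have hck : (k : ℝ) = k' := by exact_mod_cast congrArg Nat.cast heq
    rw [← hmm', ← hck]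
    nlinarith [hm0, hc2, hε.le]
end
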